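/- arXiv:2407.15506 — 3 statements merged into one kernel-verified Lean document; each statement's English description precedes it below -/
import Mathlib

section
/- Let (W,S) be a Coxeter system in which every rank-3 standard parabolic subgroup is infinite. If α ≠ ±β are roots and R, T are spherical rank-2 residues both stabilized by r_α and by r_β, then R = T. -/
variable {B W : Type*} [Group W] {M : CoxeterMatrix B}

/-- The simple root `α_s = {w ∈ W : ℓ(sw) > ℓ(w)}`, viewed as a half-space of chambers. -/
def simpleRoot (cs : CoxeterSystem M W) (s : B) : Set W :=
  {w : W | cs.length w < cs.length (cs.simple s * w)}

/-- `α` is a root (half-space) with associated reflection `r`: `α = v • α_s` and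
`r = v s v⁻¹` for some `v ∈ W`, `s ∈ S`.  The opposite root `-α` is the complement `αᶜ`. -/
def IsRootPair (cs : CoxeterSystem M W) (α : Set W) (r : W) : Prop :=
  ∃ (v : W) (s : B), α = (v * ·) '' simpleRoot cs s ∧ r = v * cs.simple s * v⁻¹

/-- A spherical rank-2 residue of the chamber system `Σ(W,S)`: a coset `c⟨s,t⟩` with
`s ≠ t` and `⟨s,t⟩` finite. -/
def IsSphRank2Residue (cs : CoxeterSystem M W) (R : Set W) : Prop :=
  ∃ (c : W) (s t : B), s ≠ t ∧
    (Subgroup.closure {cs.simple s, cs.simple t} : Set W).Finite ∧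
    R = (c * ·) '' (Subgroup.closure {cs.simple s, cs.simple t} : Set W)

/-- `∂²α`: the spherical rank-2 residues stabilized by the reflection `r = r_α`. -/
def res2 (cs : CoxeterSystem M W) (r : W) : Set (Set W) :=
  {R | IsSphRank2Residue cs R ∧ (r * ·) '' R = R}

set_option linter.unusedSectionVars false
namespace Stmt14Aux
open CoxeterSystem List

variable (cs : CoxeterSystem M W)

/-- counting function valued in `ZMod 2`. -/
def cnt (t : W) [DecidableEq W] : List W → ZMod 2 :=
  fun L => (L.map (fun x => if x = t then (1 : ZMod 2) else 0)).sum

variable [DecidableEq W]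

@[simp] lemma cnt_nil (t : W) : cnt t ([] : List W) = 0 := rfl

lemma cnt_cons (t x : W) (L : List W) :
    cnt t (x :: L) = (if x = t then (1:ZMod 2) else 0) + cnt t L := by
  simp [cnt]

lemma mem_of_cnt_ne_zero {t : W} {L : List W} (h : cnt t L ≠ 0) : t ∈ L := by
  induction L with
  | nil => simp at h
  | cons x L ih =>
    rw [cnt_cons] at h
    by_cases hx : x = t
    · simp [hx]
    · simp only [hx, if_false, zero_add] at h
      exact mem_cons_of_mem _ (ih h)

/-- The underlying function of the permutation attached to a simple reflection. -/
def fmap (i : B) : W × ZMod 2 → W × ZMod 2 :=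
  fun p => (cs.simple i * p.1 * cs.simple i, p.2 + if p.1 = cs.simple i then 1 else 0)

lemma fmap_involutive (i : B) : Function.Involutive (fmap cs i) := by
  intro p
  unfold fmap
  have h1 : cs.simple i * (cs.simple i * p.1 * cs.simple i) * cs.simple i = p.1 := by
    simp [mul_assoc, cs.simple_mul_simple_cancel_left, cs.simple_mul_simple_self]
  have h2 : (cs.simple i * p.1 * cs.simple i = cs.simple i) ↔ (p.1 = cs.simple i) := by
    constructor
    · intro h
      have := congrArg (fun w => cs.simple i * w * cs.simple i) h
      simpa [mul_assoc, cs.simple_mul_simple_cancel_left, cs.simple_mul_simple_self] using this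
    · intro h; rw [h]; simp [cs.simple_mul_simple_self]
  ext
  · exact h1
  · simp only [h2]
    by_cases h : p.1 = cs.simple i <;> simp [h, CharTwo.add_self_eq_zero]
    · rw [add_assoc]; simp [CharTwo.add_self_eq_zero]

/-- The permutation of `W × ZMod 2` attached to a simple reflection. -/
def fperm (i : B) : Equiv.Perm (W × ZMod 2) := (fmap_involutive cs i).toPerm

lemma fperm_apply (i : B) (p : W × ZMod 2) :
    fperm cs i p = (cs.simple i * p.1 * cs.simple i, p.2 + if p.1 = cs.simple i then 1 else 0) :=
  rfl

/-- composite of the permutations along a word, with the inversion-counting formula. -/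
lemma fperm_word (ω : List B) (t : W) (ε : ZMod 2) :
    ((ω.map (fperm cs)).prod) (t, ε)
      = (cs.wordProd ω * t * (cs.wordProd ω)⁻¹, ε + cnt t (cs.rightInvSeq ω)) := by
  induction ω generalizing ε with
  | nil => simp [cnt]
  | cons i ω ih =>
    have hris : cs.rightInvSeq (i :: ω)
        = ((cs.wordProd ω)⁻¹ * cs.simple i * cs.wordProd ω) :: cs.rightInvSeq ω := rfl
    rw [map_cons, prod_cons, Equiv.Perm.mul_apply, ih, fperm_apply]
    have hfst : cs.simple i * (cs.wordProd ω * t * (cs.wordProd ω)⁻¹) * cs.simple i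
        = cs.wordProd (i :: ω) * t * (cs.wordProd (i :: ω))⁻¹ := by
      rw [cs.wordProd_cons, mul_inv_rev, cs.inv_simple]
      group
    have hiff : (cs.wordProd ω * t * (cs.wordProd ω)⁻¹ = cs.simple i)
        ↔ ((cs.wordProd ω)⁻¹ * cs.simple i * cs.wordProd ω = t) := by
      constructor
      · intro h; rw [← h]; group
      · intro h; rw [← h]; group
    rw [hris, cnt_cons]
    ext
    · exact hfst
    · simp only []
      rw [if_congr hiff rfl rfl]
      ring


/-- alternating word of length `2k` : `i, i', i, i', ...` -/
def aw (i i' : B) : ℕ → List B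
  | 0 => []
  | k+1 => i :: i' :: aw i i' k

lemma prod_aw (i i' : B) (k : ℕ) :
    cs.wordProd (aw i i' k) = (cs.simple i * cs.simple i') ^ k := by
  induction k with
  | zero => simp [aw]
  | succ k ih =>
    rw [aw, cs.wordProd_cons, cs.wordProd_cons, ih, pow_succ']
    group

def esq (i i' : B) (j : ℕ) : W := (cs.simple i' * cs.simple i) ^ j * cs.simple i'

lemma simple_mul_pow (i i' : B) (k : ℕ) :
    cs.simple i' * (cs.simple i * cs.simple i') ^ k
      = (cs.simple i' * cs.simple i) ^ k * cs.simple i' := by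
  induction k with
  | zero => simp
  | succ k ih =>
    rw [pow_succ', ← mul_assoc, ← mul_assoc, pow_succ']
    rw [show cs.simple i' * cs.simple i * cs.simple i' * (cs.simple i * cs.simple i') ^ k
        = cs.simple i' * cs.simple i * (cs.simple i' * (cs.simple i * cs.simple i') ^ k) by group]
    rw [ih]
    group

lemma ris_aw (i i' : B) (k : ℕ) :
    cs.rightInvSeq (aw i i' (k+1))
      = esq cs i i' (2*k+1) :: esq cs i i' (2*k) :: cs.rightInvSeq (aw i i' k) := by
  have hinv : (cs.simple i * cs.simple i')⁻¹ = cs.simple i' * cs.simple i := by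
    rw [mul_inv_rev, cs.inv_simple, cs.inv_simple]
  have hpowinv : ∀ n : ℕ, ((cs.simple i * cs.simple i') ^ n)⁻¹ = (cs.simple i' * cs.simple i) ^ n := by
    intro n; rw [← inv_pow, hinv]
  show ((cs.wordProd (i' :: aw i i' k))⁻¹ * cs.simple i * cs.wordProd (i' :: aw i i' k))
      :: cs.rightInvSeq (i' :: aw i i' k) = _
  have h2 : cs.rightInvSeq (i' :: aw i i' k)
      = ((cs.wordProd (aw i i' k))⁻¹ * cs.simple i' * cs.wordProd (aw i i' k))
        :: cs.rightInvSeq (aw i i' k) := rfl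
  rw [h2, cs.wordProd_cons, prod_aw]
  have hyz : ∀ n : ℕ, cs.simple i' * (cs.simple i * cs.simple i') ^ n
      = (cs.simple i' * cs.simple i) ^ n * cs.simple i' := simple_mul_pow cs i i'
  have hzy : ∀ n : ℕ, cs.simple i * (cs.simple i' * cs.simple i) ^ n
      = (cs.simple i * cs.simple i') ^ n * cs.simple i := simple_mul_pow cs i' i
  congr 1
  · -- first entry
    show (cs.simple i' * (cs.simple i * cs.simple i') ^ k)⁻¹ * cs.simple i *
        (cs.simple i' * (cs.simple i * cs.simple i') ^ k) = esq cs i i' (2*k+1)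
    rw [mul_inv_rev, hpowinv, cs.inv_simple, esq]
    calc (cs.simple i' * cs.simple i) ^ k * cs.simple i' * cs.simple i *
          (cs.simple i' * (cs.simple i * cs.simple i') ^ k)
        = (cs.simple i' * cs.simple i) ^ k * (cs.simple i' * cs.simple i) *
          (cs.simple i' * (cs.simple i * cs.simple i') ^ k) := by group
      _ = (cs.simple i' * cs.simple i) ^ k * (cs.simple i' * cs.simple i) *
          ((cs.simple i' * cs.simple i) ^ k * cs.simple i') := by rw [hyz]
      _ = (cs.simple i' * cs.simple i) ^ (2*k+1) * cs.simple i' := by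
            rw [show 2*k+1 = k + 1 + k by ring, pow_add, pow_succ]
            group
  · congr 1
    rw [hpowinv, esq]
    calc (cs.simple i' * cs.simple i) ^ k * cs.simple i' * (cs.simple i * cs.simple i') ^ k
        = (cs.simple i' * cs.simple i) ^ k * (cs.simple i' * (cs.simple i * cs.simple i') ^ k) := by
            group
      _ = (cs.simple i' * cs.simple i) ^ k * ((cs.simple i' * cs.simple i) ^ k * cs.simple i') := by
            rw [hyz]
      _ = (cs.simple i' * cs.simple i) ^ (2*k) * cs.simple i' := by
            rw [show 2*k = k + k by ring, pow_add]
            group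

lemma esq_periodic (i i' : B) (m : ℕ) (hm : (cs.simple i' * cs.simple i) ^ m = 1) (j : ℕ) :
    esq cs i i' (j + m) = esq cs i i' j := by
  rw [esq, esq, pow_add, hm, mul_one]


lemma cnt_ris_aw (i i' : B) (k : ℕ) (t : W) :
    cnt t (cs.rightInvSeq (aw i i' k))
      = ∑ j ∈ Finset.range (2*k), (if esq cs i i' j = t then (1:ZMod 2) else 0) := by
  induction k with
  | zero => simp [aw, cnt]
  | succ k ih =>
    rw [ris_aw, cnt_cons, cnt_cons, ih]
    rw [show 2*(k+1) = (2*k+1)+1 by ring, Finset.sum_range_succ, Finset.sum_range_succ]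
    ring

lemma cnt_ris_aw_zero (i i' : B) (m : ℕ) (hm : (cs.simple i' * cs.simple i) ^ m = 1) (t : W) :
    cnt t (cs.rightInvSeq (aw i i' m)) = 0 := by
  rw [cnt_ris_aw]
  rw [show 2*m = m + m by ring, Finset.sum_range_add]
  have hper : ∀ j, esq cs i i' (m + j) = esq cs i i' j := fun j => by
    rw [add_comm]; exact esq_periodic cs i i' m hm j
  have : ∀ j, (if esq cs i i' (m + j) = t then (1:ZMod 2) else 0)
      = (if esq cs i i' j = t then (1:ZMod 2) else 0) := fun j => by rw [hper]
  rw [Finset.sum_congr rfl (fun j _ => this j)]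
  rw [← Finset.sum_add_distrib]
  have : ∀ a : ZMod 2, a + a = 0 := by decide
  calc ∑ j ∈ Finset.range m, ((if esq cs i i' j = t then (1:ZMod 2) else 0)
          + (if esq cs i i' j = t then (1:ZMod 2) else 0))
      = ∑ j ∈ Finset.range m, (0:ZMod 2) := Finset.sum_congr rfl (fun j _ => this _)
    _ = 0 := Finset.sum_const_zero

lemma mapprod_aw (i i' : B) (k : ℕ) :
    ((aw i i' k).map (fperm cs)).prod = (fperm cs i * fperm cs i') ^ k := by
  induction k with
  | zero => simp [aw]
  | succ k ih =>
    rw [aw]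
    simp only [map_cons, prod_cons, ih, pow_succ']
    rw [mul_assoc]

lemma fperm_liftable : M.IsLiftable (fperm cs) := by
  intro i i'
  have h1 : cs.wordProd (aw i i' (M i i')) = 1 := by
    rw [prod_aw, cs.simple_mul_simple_pow]
  have h2 : ∀ t : W, cnt t (cs.rightInvSeq (aw i i' (M i i'))) = 0 :=
    cnt_ris_aw_zero cs i i' _ (cs.simple_mul_simple_pow' i i')
  rw [← mapprod_aw]
  apply Equiv.ext
  rintro ⟨t, ε⟩
  rw [fperm_word, h1, h2]
  simp

/-- The reflection-cocycle homomorphism. -/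
noncomputable def phi : W →* Equiv.Perm (W × ZMod 2) := cs.lift ⟨fperm cs, fperm_liftable cs⟩

/-- `eta cs w t = 1` iff `t` is a right inversion of `w` (for reflections `t`). -/
noncomputable def eta (w t : W) : ZMod 2 := ((phi cs w) (t, 0)).2

lemma phi_wordProd (ω : List B) (t : W) (ε : ZMod 2) :
    phi cs (cs.wordProd ω) (t, ε)
      = (cs.wordProd ω * t * (cs.wordProd ω)⁻¹, ε + cnt t (cs.rightInvSeq ω)) := by
  have h0 : cs.wordProd ω = (ω.map cs.simple).prod := rfl
  have h1 : phi cs (cs.wordProd ω) = ((ω.map cs.simple).map (phi cs)).prod := by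
    rw [h0, MonoidHom.map_list_prod]
  have h2 : (ω.map cs.simple).map (phi cs) = ω.map (fperm cs) := by
    rw [List.map_map]
    apply List.map_congr_left
    intro i _
    show phi cs (cs.simple i) = fperm cs i
    exact cs.lift_apply_simple (fperm_liftable cs) i
  rw [h1, h2, fperm_word]

lemma eta_wordProd (ω : List B) (t : W) :
    eta cs (cs.wordProd ω) t = cnt t (cs.rightInvSeq ω) := by
  rw [eta, phi_wordProd]
  simp

lemma eta_spec (w t : W) (ε : ZMod 2) :
    phi cs w (t, ε) = (w * t * w⁻¹, ε + eta cs w t) := by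
  obtain ⟨ω, rfl⟩ := cs.wordProd_surjective w
  rw [phi_wordProd, eta_wordProd]

lemma eta_mul (a b t : W) : eta cs (a * b) t = eta cs b t + eta cs a (b * t * b⁻¹) := by
  have h : phi cs (a * b) (t, 0) = phi cs a (phi cs b (t, 0)) := by
    rw [map_mul]; rfl
  rw [eta_spec, eta_spec, eta_spec] at h
  have := congrArg Prod.snd h
  simpa using this

lemma eta_simple (i : B) (t : W) :
    eta cs (cs.simple i) t = if t = cs.simple i then 1 else 0 := by
  have h : phi cs (cs.simple i) = fperm cs i := cs.lift_apply_simple (fperm_liftable cs) i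
  rw [eta, h, fperm_apply]
  simp

lemma eta_one (t : W) : eta cs 1 t = 0 := by
  rw [eta, map_one]; rfl

lemma zmod2_add_eq_zero : ∀ a b : ZMod 2, a + b = 0 ↔ b = a := by decide

lemma zmod2_ne_one : ∀ a : ZMod 2, a ≠ 1 ↔ a = 0 := by decide

lemma eta_inv_conj (w t : W) : eta cs w⁻¹ (w * t * w⁻¹) = eta cs w t := by
  have h := eta_mul cs w⁻¹ w t
  rw [inv_mul_cancel, eta_one] at h
  exact ((zmod2_add_eq_zero _ _).mp h.symm)

lemma eta_refl_self {t : W} (ht : cs.IsReflection t) : eta cs t t = 1 := by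
  obtain ⟨v, i, rfl⟩ := ht
  set t := v * cs.simple i * v⁻¹ with hteq
  have h1 : eta cs t t = eta cs v⁻¹ t + eta cs (v * cs.simple i) (v⁻¹ * t * v⁻¹⁻¹) := by
    rw [hteq]
    exact eta_mul cs (v * cs.simple i) v⁻¹ t
  have h2 : v⁻¹ * t * v⁻¹⁻¹ = cs.simple i := by rw [hteq]; group
  have h3 : eta cs (v * cs.simple i) (cs.simple i)
      = eta cs (cs.simple i) (cs.simple i)
        + eta cs v (cs.simple i * cs.simple i * (cs.simple i)⁻¹) := eta_mul cs _ _ _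
  have h4 : cs.simple i * cs.simple i * (cs.simple i)⁻¹ = cs.simple i := by
    rw [cs.simple_mul_simple_self, one_mul, cs.inv_simple]
  have h5 : eta cs v⁻¹ t = eta cs v (cs.simple i) := eta_inv_conj cs v (cs.simple i)
  rw [h1, h2, h3, h4, h5, eta_simple, if_pos rfl]
  have : ∀ a : ZMod 2, a + (1 + a) = 1 := by decide
  exact this _

lemma isRightInversion_iff_eta {t : W} (ht : cs.IsReflection t) (w : W) :
    cs.IsRightInversion w t ↔ eta cs w t = 1 := by
  have dirA : ∀ u : W, eta cs u t = 1 → cs.IsRightInversion u t := by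
    intro u hu
    obtain ⟨ω, hred, rfl⟩ := cs.exists_reduced_word' u
    have hmem : t ∈ cs.rightInvSeq ω := by
      apply mem_of_cnt_ne_zero
      rw [← eta_wordProd, hu]
      exact one_ne_zero
    exact cs.isRightInversion_of_mem_rightInvSeq hred hmem
  constructor
  · intro h
    by_contra hne
    have h0 : eta cs w t = 0 := (zmod2_ne_one _).mp hne
    have h1 : eta cs (w * t) t = 1 := by
      rw [eta_mul, eta_refl_self cs ht, ht.inv, ht.mul_self, one_mul, h0]
      rfl
    have h2 := dirA _ h1
    have h3 : w * t * t = w := by rw [mul_assoc, ht.mul_self, mul_one]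
    have h4 := h2.2
    rw [h3] at h4
    exact absurd h4 (Nat.lt_asymm h.2)
  · exact dirA w

lemma isLeftInversion_iff_eta {t : W} (ht : cs.IsReflection t) (w : W) :
    cs.IsLeftInversion w t ↔ eta cs w⁻¹ t = 1 := by
  rw [← isRightInversion_iff_eta cs ht]
  exact cs.isRightInversion_inv_iff.symm

lemma exchange_right (ω : List B) {t : W} (ht : cs.IsReflection t)
    (h : cs.IsRightInversion (cs.wordProd ω) t) :
    ∃ j < ω.length, cs.wordProd ω * t = cs.wordProd (ω.eraseIdx j) := by
  have h1 : eta cs (cs.wordProd ω) t = 1 := (isRightInversion_iff_eta cs ht _).mp h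
  have hmem : t ∈ cs.rightInvSeq ω := by
    apply mem_of_cnt_ne_zero
    rw [← eta_wordProd, h1]
    exact one_ne_zero
  obtain ⟨j, hj, hje⟩ := List.mem_iff_getElem.mp hmem
  rw [cs.length_rightInvSeq] at hj
  refine ⟨j, hj, ?_⟩
  have : (cs.rightInvSeq ω).getD j 1 = t := by
    rw [List.getD_eq_getElem _ 1 (by rw [cs.length_rightInvSeq]; exact hj)]
    exact hje
  rw [← this]
  exact cs.wordProd_mul_getD_rightInvSeq ω j

lemma exchange_left (ω : List B) {t : W} (ht : cs.IsReflection t)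
    (h : cs.IsLeftInversion (cs.wordProd ω) t) :
    ∃ j < ω.length, t * cs.wordProd ω = cs.wordProd (ω.eraseIdx j) := by
  have h1 : eta cs (cs.wordProd ω)⁻¹ t = 1 := (isLeftInversion_iff_eta cs ht _).mp h
  have h2 : eta cs (cs.wordProd ω.reverse) t = 1 := by rwa [cs.wordProd_reverse]
  have hmem : t ∈ cs.rightInvSeq ω.reverse := by
    apply mem_of_cnt_ne_zero
    rw [← eta_wordProd, h2]
    exact one_ne_zero
  rw [cs.rightInvSeq_reverse, List.mem_reverse] at hmem
  obtain ⟨j, hj, hje⟩ := List.mem_iff_getElem.mp hmem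
  rw [cs.length_leftInvSeq] at hj
  refine ⟨j, hj, ?_⟩
  have : (cs.leftInvSeq ω).getD j 1 = t := by
    rw [List.getD_eq_getElem _ 1 (by rw [cs.length_leftInvSeq]; exact hj)]
    exact hje
  rw [← this]
  exact cs.getD_leftInvSeq_mul_wordProd ω j

section ListHelpers
variable {α : Type*}

lemma eraseIdx_append_left : ∀ (l₁ : List α) (j : ℕ), j < l₁.length → ∀ l₂ : List α,
    (l₁ ++ l₂).eraseIdx j = l₁.eraseIdx j ++ l₂ := by
  intro l₁
  induction l₁ with
  | nil => intro j hj; simp at hj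
  | cons a l ih =>
    intro j hj l₂
    cases j with
    | zero => simp
    | succ j =>
      simp only [cons_append, eraseIdx_cons_succ, cons.injEq, true_and]
      exact ih j (by simpa using hj) l₂

lemma eraseIdx_append_right : ∀ (l₁ l₂ : List α) (j : ℕ), l₁.length ≤ j →
    (l₁ ++ l₂).eraseIdx j = l₁ ++ l₂.eraseIdx (j - l₁.length) := by
  intro l₁
  induction l₁ with
  | nil => intro l₂ j _; simp
  | cons a l ih =>
    intro l₂ j hj
    cases j with
    | zero => simp at hj
    | succ j =>
      simp only [cons_append, eraseIdx_cons_succ, cons.injEq, true_and, length_cons,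
        Nat.succ_sub_succ]
      exact ih l₂ j (by simpa using hj)

end ListHelpers

section Parabolic

variable (K : Set B)

lemma wordProd_mem {ω : List B} (h : ∀ i ∈ ω, i ∈ K) :
    cs.wordProd ω ∈ Subgroup.closure (cs.simple '' K) := by
  induction ω with
  | nil => rw [cs.wordProd_nil]; exact one_mem _
  | cons i ω ih =>
    rw [cs.wordProd_cons]
    exact mul_mem (Subgroup.subset_closure ⟨i, h i (mem_cons_self), rfl⟩)
      (ih (fun j hj => h j (mem_cons_of_mem i hj)))

lemma del_aux : ∀ (n : ℕ) (ω : List B), ω.length ≤ n → (∀ i ∈ ω, i ∈ K) →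
    ∃ ω' : List B, (∀ i ∈ ω', i ∈ K) ∧ cs.IsReduced ω' ∧ cs.wordProd ω' = cs.wordProd ω := by
  intro n
  induction n with
  | zero =>
    intro ω hlen hK
    have : ω = [] := List.eq_nil_of_length_eq_zero (Nat.le_zero.mp hlen)
    subst this
    exact ⟨[], by simp, by simp [CoxeterSystem.IsReduced], rfl⟩
  | succ n ih =>
    intro ω hlen hK
    by_cases hred : cs.IsReduced ω
    · exact ⟨ω, hK, hred, rfl⟩
    rcases ω.eq_nil_or_concat' with rfl | ⟨ω₀, i, rfl⟩
    · exact absurd (by simp [CoxeterSystem.IsReduced] : cs.IsReduced ([] : List B)) hred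
    have hKω₀ : ∀ j ∈ ω₀, j ∈ K := fun j hj => hK j (by simp [hj])
    have hKi : i ∈ K := hK i (by simp)
    have hlen₀ : ω₀.length ≤ n := by
      have := hlen; simp only [length_append, length_singleton] at this; omega
    by_cases h0 : cs.IsReduced ω₀
    · -- last letter must go down
      have hprod : cs.wordProd (ω₀ ++ [i]) = cs.wordProd ω₀ * cs.simple i := by
        rw [cs.wordProd_append, cs.wordProd_singleton]
      rcases cs.length_mul_simple (cs.wordProd ω₀) i with hup | hdown
      · exfalso
        apply hred
        show cs.length (cs.wordProd (ω₀ ++ [i])) = _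
        rw [hprod, hup, h0]
        simp
      · have hinv : cs.IsRightInversion (cs.wordProd ω₀) (cs.simple i) :=
          ⟨cs.isReflection_simple i, by omega⟩
        obtain ⟨j, hj, hje⟩ := exchange_right cs ω₀ (cs.isReflection_simple i) hinv
        have hK' : ∀ l ∈ ω₀.eraseIdx j, l ∈ K := fun l hl =>
          hKω₀ l ((ω₀.eraseIdx_sublist j).mem hl)
        have hlen' : (ω₀.eraseIdx j).length ≤ n := by
          have := List.length_eraseIdx_add_one hj; omega
        obtain ⟨ω', h1, h2, h3⟩ := ih (ω₀.eraseIdx j) hlen' hK'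
        exact ⟨ω', h1, h2, by rw [h3, ← hje, hprod]⟩
    · obtain ⟨ω₁, hK1, hred1, hprod1⟩ := ih ω₀ hlen₀ hKω₀
      have hlt : ω₁.length < ω₀.length := by
        have h1 : cs.length (cs.wordProd ω₀) ≤ ω₀.length := cs.length_wordProd_le ω₀
        have h2 : cs.length (cs.wordProd ω₀) ≠ ω₀.length := fun h => h0 h
        have h3 : cs.length (cs.wordProd ω₁) = ω₁.length := hred1
        rw [hprod1] at h3
        omega
      have hlen1 : (ω₁ ++ [i]).length ≤ n := by
        simp only [length_append, length_singleton]; omega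
      obtain ⟨ω', h1, h2, h3⟩ := ih (ω₁ ++ [i])  hlen1
        (fun j hj => by
          rcases List.mem_append.mp hj with h | h
          · exact hK1 j h
          · simp at h; subst h; exact hKi)
      refine ⟨ω', h1, h2, ?_⟩
      rw [h3, cs.wordProd_append, cs.wordProd_append, hprod1]

/-- every element of a standard parabolic subgroup has a reduced word with letters in `K`. -/
lemma exists_reduced_word_sub {w : W} (hw : w ∈ Subgroup.closure (cs.simple '' K)) :
    ∃ ω : List B, (∀ i ∈ ω, i ∈ K) ∧ cs.IsReduced ω ∧ w = cs.wordProd ω := by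
  have main : ∃ ω : List B, (∀ i ∈ ω, i ∈ K) ∧ w = cs.wordProd ω := by
    induction hw using Subgroup.closure_induction with
    | mem x hx =>
      obtain ⟨i, hi, rfl⟩ := hx
      exact ⟨[i], by simpa using hi, by rw [cs.wordProd_singleton]⟩
    | one => exact ⟨[], by simp, by simp⟩
    | mul x y hx hy ihx ihy =>
      obtain ⟨ω₁, h1, rfl⟩ := ihx
      obtain ⟨ω₂, h2, rfl⟩ := ihy
      refine ⟨ω₁ ++ ω₂, ?_, by rw [cs.wordProd_append]⟩
      intro j hj
      rcases List.mem_append.mp hj with h | h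
      · exact h1 j h
      · exact h2 j h
    | inv x hx ihx =>
      obtain ⟨ω, h1, rfl⟩ := ihx
      exact ⟨ω.reverse, fun j hj => h1 j (List.mem_reverse.mp hj), by rw [cs.wordProd_reverse]⟩
  obtain ⟨ω, h1, rfl⟩ := main
  obtain ⟨ω', h1', h2', h3'⟩ := del_aux cs K ω.length ω le_rfl h1
  exact ⟨ω', h1', h2', h3'.symm⟩

lemma exists_leftDescent_mem {w : W} (hw : w ∈ Subgroup.closure (cs.simple '' K)) (hne : w ≠ 1) :
    ∃ i ∈ K, cs.IsLeftDescent w i ∧ cs.simple i * w ∈ Subgroup.closure (cs.simple '' K) := by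
  obtain ⟨ω, hK, hred, rfl⟩ := exists_reduced_word_sub cs K hw
  cases ω with
  | nil => exact absurd (by simp) hne
  | cons i ω' =>
    refine ⟨i, hK i (mem_cons_self), ?_, ?_⟩
    · have h1 : cs.simple i * cs.wordProd (i :: ω') = cs.wordProd ω' := by
        rw [cs.wordProd_cons, cs.simple_mul_simple_cancel_left]
      have h2 : cs.IsReduced ω' := by
        have := hred.drop 1
        simpa using this
      show cs.length _ < cs.length _
      rw [h1, hred, h2]
      simp
    · rw [cs.wordProd_cons, cs.simple_mul_simple_cancel_left]
      exact wordProd_mem cs K (fun j hj => hK j (mem_cons_of_mem i hj))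

lemma simple_img_of_length_one_mem {w : W} (hw : w ∈ Subgroup.closure (cs.simple '' K))
    (hl : cs.length w = 1) : w ∈ cs.simple '' K := by
  obtain ⟨ω, hK, hred, rfl⟩ := exists_reduced_word_sub cs K hw
  have hlen : ω.length = 1 := by rw [← hred]; exact hl
  obtain ⟨i, rfl⟩ : ∃ i, ω = [i] := by
    cases ω with
    | nil => simp at hlen
    | cons i ω' =>
      cases ω' with
      | nil => exact ⟨i, rfl⟩
      | cons j ω'' => simp at hlen
  exact ⟨i, hK i (by simp), by rw [cs.wordProd_singleton]⟩

/-- Existence of the minimal coset representative with length additivity. -/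
lemma coset_min_rep (w : W) :
    ∃ d : W, (∃ h ∈ Subgroup.closure (cs.simple '' K), w * h = d) ∧
      ∀ h ∈ Subgroup.closure (cs.simple '' K), cs.length (d * h) = cs.length d + cs.length h := by
  classical
  set P := Subgroup.closure (cs.simple '' K) with hP
  set S : Set ℕ := (fun h => cs.length (w * h)) '' (P : Set W) with hS
  have hSne : S.Nonempty := ⟨cs.length w, 1, one_mem P, by simp⟩
  obtain ⟨h₀, hh₀, hl₀⟩ := Nat.sInf_mem hSne
  set d := w * h₀ with hd
  have hmin : ∀ h ∈ P, cs.length d ≤ cs.length (w * h) := by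
    intro h hh
    have hl₀' : cs.length (w * h₀) = sInf S := hl₀
    rw [hd, hl₀']
    exact Nat.sInf_le ⟨h, hh, rfl⟩
  refine ⟨d, ⟨h₀, hh₀, rfl⟩, ?_⟩
  -- additivity by strong induction on length h
  have key : ∀ (n : ℕ) (h : W), h ∈ P → cs.length h ≤ n →
      cs.length (d * h) = cs.length d + cs.length h := by
    intro n
    induction n with
    | zero =>
      intro h hh hlen
      have : h = 1 := cs.length_eq_zero_iff.mp (Nat.le_zero.mp hlen)
      subst this; simp
    | succ n ih =>
      intro h hh hlen
      obtain ⟨ω, hKω, hred, rfl⟩ := exists_reduced_word_sub cs K hh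
      rcases ω.eq_nil_or_concat' with rfl | ⟨ω₀, i, rfl⟩
      · simp
      have hprod : cs.wordProd (ω₀ ++ [i]) = cs.wordProd ω₀ * cs.simple i := by
        rw [cs.wordProd_append, cs.wordProd_singleton]
      have hredω₀ : cs.IsReduced ω₀ := by
        have := hred.take ω₀.length
        simpa [List.take_left] using this
      have hh' : cs.wordProd ω₀ ∈ P := wordProd_mem cs K (fun j hj => hKω j (by simp [hj]))
      have hlh : cs.length (cs.wordProd (ω₀ ++ [i])) = ω₀.length + 1 := by
        rw [hred]; simp
      have hlh' : cs.length (cs.wordProd ω₀) = ω₀.length := hredω₀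
      have ihh : cs.length (d * cs.wordProd ω₀) = cs.length d + ω₀.length := by
        rw [ih (cs.wordProd ω₀) hh' (by omega), hlh']
      -- it suffices to show the last letter goes up
      rcases cs.length_mul_simple (d * cs.wordProd ω₀) i with hup | hdown
      · have hlh2 : cs.length (cs.wordProd ω₀ * cs.simple i) = ω₀.length + 1 := by
          rw [← hprod]; exact hlh
        rw [hprod, ← mul_assoc, hup, ihh, hlh2]
        omega
      · exfalso
        -- exchange
        obtain ⟨ωd, hωdlen, hωdprod⟩ := cs.exists_reduced_word d
        have hωdlen : cs.length d = ωd.length := by rw [hωdprod]; exact hωdlen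
        have hfullprod : cs.wordProd (ωd ++ ω₀) = d * cs.wordProd ω₀ := by
          rw [cs.wordProd_append, ← hωdprod]
        have hfullred : cs.IsReduced (ωd ++ ω₀) := by
          show cs.length _ = _
          rw [hfullprod, ihh]
          simp [hωdlen]
        have hinv : cs.IsRightInversion (cs.wordProd (ωd ++ ω₀)) (cs.simple i) := by
          refine ⟨cs.isReflection_simple i, ?_⟩
          rw [hfullprod]
          omega
        obtain ⟨j, hj, hje⟩ := exchange_right cs (ωd ++ ω₀) (cs.isReflection_simple i) hinv
        rw [hfullprod] at hje
        by_cases hjd : j < ωd.length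
        · -- contradiction with minimality
          rw [eraseIdx_append_left ωd j hjd ω₀] at hje
          rw [cs.wordProd_append] at hje
          -- d * (ω₀ s i ω₀⁻¹) = π (ωd.eraseIdx j)
          have hg : d * (cs.wordProd ω₀ * cs.simple i * (cs.wordProd ω₀)⁻¹)
              = cs.wordProd (ωd.eraseIdx j) := by
            have := congrArg (fun x => x * (cs.wordProd ω₀)⁻¹) hje
            simp only [mul_assoc] at this ⊢
            simpa using this
          have hgP : cs.wordProd ω₀ * cs.simple i * (cs.wordProd ω₀)⁻¹ ∈ P := by
            apply mul_mem (mul_mem hh' _) (inv_mem hh')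
            exact Subgroup.subset_closure ⟨i, hKω i (by simp), rfl⟩
          have hlen1 : cs.length (cs.wordProd (ωd.eraseIdx j)) ≤ ωd.length - 1 := by
            have h1 := cs.length_wordProd_le (ωd.eraseIdx j)
            have h2 := List.length_eraseIdx_add_one hjd
            omega
          have hmem : d * (cs.wordProd ω₀ * cs.simple i * (cs.wordProd ω₀)⁻¹)
              = w * (h₀ * (cs.wordProd ω₀ * cs.simple i * (cs.wordProd ω₀)⁻¹)) := by
            rw [hd]; group
          have := hmin _ (mul_mem hh₀ hgP)
          rw [← hmem, hg] at this
          have hωd0 : 0 < ωd.length := by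
            omega
          omega
        · push_neg at hjd
          rw [eraseIdx_append_right ωd ω₀ j hjd] at hje
          rw [cs.wordProd_append, ← hωdprod] at hje
          have hcancel : cs.wordProd ω₀ * cs.simple i
              = cs.wordProd (ω₀.eraseIdx (j - ωd.length)) := by
            have := hje
            rw [mul_assoc] at this
            exact mul_left_cancel this
          have hjlt : j - ωd.length < ω₀.length := by
            simp only [length_append] at hj
            omega
          have h1 := cs.length_wordProd_le (ω₀.eraseIdx (j - ωd.length))
          have h2 := List.length_eraseIdx_add_one hjlt
          rw [← hcancel] at h1
          rw [← hprod] at h1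
          rw [hlh] at h1
          omega
  intro h hh
  exact key (cs.length h) h hh le_rfl

end Parabolic

section DescentBound

variable (K : Set B)

/-- If every element of `K` is a left descent of `v`, lengths in the parabolic `W_K`
are controlled by `v`. -/
lemma descent_bound (v : W) (hv : ∀ i ∈ K, cs.IsLeftDescent v i) :
    ∀ x ∈ Subgroup.closure (cs.simple '' K),
      cs.length x + cs.length (x * v) = cs.length v := by
  have key : ∀ (n : ℕ) (x : W), x ∈ Subgroup.closure (cs.simple '' K) → cs.length x ≤ n →
      cs.length x + cs.length (x * v) = cs.length v := by
    intro n
    induction n with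
    | zero =>
      intro x hx hlen
      have : x = 1 := cs.length_eq_zero_iff.mp (Nat.le_zero.mp hlen)
      subst this; simp
    | succ n ih =>
      intro x hx hlen
      obtain ⟨ω, hKω, hred, rfl⟩ := exists_reduced_word_sub cs K hx
      rcases ω.eq_nil_or_concat' with rfl | ⟨ω₀, σ, rfl⟩
      · simp
      have hprod : cs.wordProd (ω₀ ++ [σ]) = cs.wordProd ω₀ * cs.simple σ := by
        rw [cs.wordProd_append, cs.wordProd_singleton]
      have hredω₀ : cs.IsReduced ω₀ := by
        have := hred.take ω₀.length
        simpa [List.take_left] using this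
      have hu'P : cs.wordProd ω₀ ∈ Subgroup.closure (cs.simple '' K) :=
        wordProd_mem cs K (fun j hj => hKω j (by simp [hj]))
      have hlx : cs.length (cs.wordProd (ω₀ ++ [σ])) = ω₀.length + 1 := by
        rw [hred]; simp
      have hlu' : cs.length (cs.wordProd ω₀) = ω₀.length := hredω₀
      have IH : cs.length (cs.wordProd ω₀) + cs.length (cs.wordProd ω₀ * v) = cs.length v :=
        ih _ hu'P (by omega)
      obtain ⟨ω₂, hω₂len, hω₂prod⟩ := cs.exists_reduced_word (cs.wordProd ω₀ * v)
      have hω₂len : cs.length (cs.wordProd ω₀ * v) = ω₂.length := by rw [hω₂prod]; exact hω₂len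
      set ω₁ := ω₀.reverse with hω₁
      have hω₁prod : cs.wordProd ω₁ = (cs.wordProd ω₀)⁻¹ := cs.wordProd_reverse ω₀
      have hfullprod : cs.wordProd (ω₁ ++ ω₂) = v := by
        rw [cs.wordProd_append, hω₁prod, ← hω₂prod]
        group
      have hdesc := hv σ (hKω σ (by simp))
      have hinv : cs.IsLeftInversion (cs.wordProd (ω₁ ++ ω₂)) (cs.simple σ) := by
        refine ⟨cs.isReflection_simple σ, ?_⟩
        rw [hfullprod]
        exact hdesc
      obtain ⟨j, hj, hje⟩ := exchange_left cs (ω₁ ++ ω₂) (cs.isReflection_simple σ) hinv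
      rw [hfullprod] at hje
      by_cases hjd : j < ω₁.length
      · exfalso
        rw [eraseIdx_append_left ω₁ j hjd ω₂] at hje
        rw [cs.wordProd_append, ← hω₂prod] at hje
        -- s σ * v = π(ω₁.erase) * (u' * v)
        have hcancel : cs.simple σ * (cs.wordProd ω₀)⁻¹ = cs.wordProd (ω₁.eraseIdx j) := by
          have h1 : cs.simple σ * v = cs.simple σ * (cs.wordProd ω₀)⁻¹ * (cs.wordProd ω₀ * v) := by
            group
          rw [h1] at hje
          exact mul_right_cancel hje
        have h2 : cs.length (cs.simple σ * (cs.wordProd ω₀)⁻¹) ≤ ω₁.length - 1 := by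
          rw [hcancel]
          have h3 := cs.length_wordProd_le (ω₁.eraseIdx j)
          have h4 := List.length_eraseIdx_add_one hjd
          omega
        have h5 : cs.length (cs.simple σ * (cs.wordProd ω₀)⁻¹) = ω₀.length + 1 := by
          have h6 : (cs.simple σ * (cs.wordProd ω₀)⁻¹)⁻¹ = cs.wordProd (ω₀ ++ [σ]) := by
            rw [hprod, mul_inv_rev, cs.inv_simple]
            group
          rw [← cs.length_inv, h6, hlx]
        have h7 : ω₁.length = ω₀.length := by simp [hω₁]
        omega
      · push_neg at hjd
        rw [eraseIdx_append_right ω₁ ω₂ j hjd] at hje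
        rw [cs.wordProd_append, hω₁prod] at hje
        have hxv : cs.wordProd (ω₀ ++ [σ]) * v = cs.wordProd (ω₂.eraseIdx (j - ω₁.length)) := by
          have h1 := congrArg (fun y => cs.wordProd ω₀ * y) hje
          rw [← mul_assoc, ← mul_assoc] at h1
          rw [hprod]
          rw [mul_assoc] at h1 ⊢
          rw [h1]
          group
        have hjlt : j - ω₁.length < ω₂.length := by
          simp only [length_append] at hj
          omega
        have h1 := cs.length_wordProd_le (ω₂.eraseIdx (j - ω₁.length))
        have h2 := List.length_eraseIdx_add_one hjlt
        rw [← hxv] at h1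
        have h3 := cs.length_mul_ge_length_sub_length' (cs.wordProd (ω₀ ++ [σ])) v
        omega
  intro x hx
  exact key (cs.length x) x hx le_rfl

lemma bounded_words_finite (hK : K.Finite) (N : ℕ) :
    {w : W | ∃ ω : List B, (∀ i ∈ ω, i ∈ K) ∧ w = cs.wordProd ω ∧ ω.length ≤ N}.Finite := by
  induction N with
  | zero =>
    apply Set.Finite.subset (Set.finite_singleton (1 : W))
    rintro w ⟨ω, _, rfl, hlen⟩
    have : ω = [] := List.eq_nil_of_length_eq_zero (Nat.le_zero.mp hlen)
    subst this
    simp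
  | succ N ih =>
    apply Set.Finite.subset (Set.Finite.union ih
      (Set.Finite.biUnion hK (fun i _ =>
        Set.Finite.image (fun x => cs.simple i * x)
          (ih : {w : W | ∃ ω : List B, (∀ i ∈ ω, i ∈ K) ∧ w = cs.wordProd ω ∧ ω.length ≤ N}.Finite))))
    rintro w ⟨ω, hKω, rfl, hlen⟩
    cases ω with
    | nil =>
      left
      exact ⟨[], by simp, rfl, by simp⟩
    | cons i ω' =>
      right
      refine Set.mem_biUnion (hKω i (by simp)) ?_
      refine ⟨cs.wordProd ω', ⟨ω', fun j hj => hKω j (by simp [hj]), rfl, ?_⟩, ?_⟩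
      · simp only [length_cons] at hlen; omega
      · rw [cs.wordProd_cons]

/-- If every element of a finite `K` is a left descent of some `v`,
then the parabolic `W_K` is finite. -/
lemma descent_parabolic_finite (v : W) (hv : ∀ i ∈ K, cs.IsLeftDescent v i) (hK : K.Finite) :
    ((Subgroup.closure (cs.simple '' K) : Subgroup W) : Set W).Finite := by
  apply Set.Finite.subset (bounded_words_finite cs K hK (cs.length v))
  intro x hx
  obtain ⟨ω, hKω, hred, rfl⟩ := exists_reduced_word_sub cs K hx
  refine ⟨ω, hKω, rfl, ?_⟩
  have h1 := descent_bound cs K v hv _ hx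
  have h2 : cs.length (cs.wordProd ω) = ω.length := hred
  omega

end DescentBound

section Longest

lemma exists_max_elt {P : Subgroup W} (hfin : (P : Set W).Finite) :
    ∃ a ∈ P, ∀ h ∈ P, cs.length h ≤ cs.length a := by
  obtain ⟨a, ha, hmax⟩ := Set.Finite.exists_maximalFor cs.length (P : Set W) hfin
    ⟨1, one_mem P⟩
  refine ⟨a, ha, fun h hh => ?_⟩
  rcases le_or_gt (cs.length h) (cs.length a) with h1 | h1
  · exact h1
  · exact absurd (hmax hh (le_of_lt h1)) (not_le.mpr h1)

lemma simple_mul_max {P : Subgroup W} {a : W} (ha : a ∈ P)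
    (hmax : ∀ h ∈ P, cs.length h ≤ cs.length a) {k : B} (hk : cs.simple k ∈ P) :
    cs.length (cs.simple k * a) + 1 = cs.length a := by
  have h1 : cs.simple k * a ∈ P := mul_mem hk ha
  have h2 := hmax _ h1
  rcases cs.length_simple_mul a k with h3 | h3
  · omega
  · exact h3

end Longest

section Core

lemma closure_involution_sub {x : W} (hx : x * x = 1) :
    ((Subgroup.closure ({x} : Set W) : Subgroup W) : Set W) ⊆ {1, x} := by
  intro y hy
  rw [SetLike.mem_coe, Subgroup.mem_closure_singleton] at hy
  obtain ⟨n, rfl⟩ := hy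
  have hx2 : x ^ (2:ℤ) = 1 := by
    rw [zpow_two, hx]
  rcases Int.even_or_odd n with ⟨c, rfl⟩ | ⟨c, rfl⟩
  · left
    rw [show c + c = 2 * c by ring, zpow_mul, hx2, one_zpow]
  · right
    rw [show 2 * c + 1 = 2 * c + 1 by rfl, zpow_add, zpow_mul, hx2, one_zpow, one_mul, zpow_one]
    exact rfl

lemma pair_closure_contra {SK : Set W} {w₀ a b : W} (hsq : w₀ * w₀ = 1)
    (hsub : SK ⊆ {w₀}) (ha : a ∈ Subgroup.closure SK) (hb : b ∈ Subgroup.closure SK)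
    (ha1 : a ≠ 1) (hb1 : b ≠ 1) (hab : a ≠ b) : False := by
  have hle : Subgroup.closure SK ≤ Subgroup.closure {w₀} := Subgroup.closure_mono hsub
  have ha' := closure_involution_sub hsq (hle ha)
  have hb' := closure_involution_sub hsq (hle hb)
  rcases ha' with h | h
  · exact ha1 h
  · rcases hb' with h' | h'
    · exact hb1 h'
    · exact hab (h.trans h'.symm)

lemma core_lemma (s t u v : B) (hst : s ≠ t) (huv : u ≠ v)
    (hHfin : ((Subgroup.closure (cs.simple '' ({u,v} : Set B)) : Subgroup W) : Set W).Finite)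
    (hrank3 : ∀ J : Finset B, J.card = 3 →
      ¬((Subgroup.closure (cs.simple '' (J : Set B)) : Subgroup W) : Set W).Finite)
    (d : W)
    (hmin : ∀ g ∈ Subgroup.closure (cs.simple '' ({s,t} : Set B)),
      ∀ h ∈ Subgroup.closure (cs.simple '' ({u,v} : Set B)),
        cs.length d ≤ cs.length (g * d * h))
    (a b : W)
    (haG : a ∈ Subgroup.closure (cs.simple '' ({s,t} : Set B)))
    (hbG : b ∈ Subgroup.closure (cs.simple '' ({s,t} : Set B)))
    (haH : d⁻¹ * a * d ∈ Subgroup.closure (cs.simple '' ({u,v} : Set B)))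
    (hbH : d⁻¹ * b * d ∈ Subgroup.closure (cs.simple '' ({u,v} : Set B)))
    (hab : a ≠ b) (ha1 : a ≠ 1) (hb1 : b ≠ 1) :
    d = 1 ∧ ((Subgroup.closure (cs.simple '' ({s,t} : Set B)) : Subgroup W) : Set W)
      = ((Subgroup.closure (cs.simple '' ({u,v} : Set B)) : Subgroup W) : Set W) := by
  classical
  set G := Subgroup.closure (cs.simple '' ({s,t} : Set B)) with hG
  set H := Subgroup.closure (cs.simple '' ({u,v} : Set B)) with hH
  -- additivity on the H side
  have ADD_H : ∀ h ∈ H, cs.length (d * h) = cs.length d + cs.length h := by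
    obtain ⟨d', ⟨h', hh', hd'⟩, add⟩ := coset_min_rep cs ({u,v} : Set B) d
    have h1 : cs.length d ≤ cs.length d' := by
      have := hmin 1 (one_mem G) h' hh'
      rwa [one_mul, hd'] at this
    have h2 : d = d' * h'⁻¹ := by rw [← hd']; group
    have h3 : cs.length d = cs.length d' + cs.length h'⁻¹ := by
      rw [h2]; exact add h'⁻¹ (inv_mem hh')
    have h4 : h'⁻¹ = 1 := cs.length_eq_zero_iff.mp (by omega)
    have h5 : d' = d := by rw [h2, h4, mul_one]
    rw [← h5]
    exact add
  -- additivity on the G side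
  have ADD_G : ∀ g ∈ G, cs.length (g * d) = cs.length g + cs.length d := by
    obtain ⟨m, ⟨g₂, hg₂, hm⟩, addm⟩ := coset_min_rep cs ({s,t} : Set B) d⁻¹
    have h1 : cs.length d ≤ cs.length m := by
      have h2 : m⁻¹ = g₂⁻¹ * d := by rw [← hm]; group
      have h3 := hmin g₂⁻¹ (inv_mem hg₂) 1 (one_mem H)
      rw [mul_one] at h3
      have h4 : cs.length m = cs.length (g₂⁻¹ * d) := by rw [← h2, cs.length_inv]
      rw [h4]
      exact h3
    have h2 : d⁻¹ = m * g₂⁻¹ := by rw [← hm]; group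
    have h3 : cs.length d⁻¹ = cs.length m + cs.length g₂⁻¹ := by
      rw [h2]; exact addm g₂⁻¹ (inv_mem hg₂)
    rw [cs.length_inv] at h3
    have h4 : g₂⁻¹ = 1 := cs.length_eq_zero_iff.mp (by omega)
    have h5 : m = d⁻¹ := by rw [h2, h4, mul_one]
    intro g hg
    have h6 : cs.length (d⁻¹ * g⁻¹) = cs.length d + cs.length g⁻¹ := by
      have h7 := addm g⁻¹ (inv_mem hg)
      rw [h5] at h7
      rw [h7, cs.length_inv]
    calc cs.length (g * d) = cs.length ((g * d)⁻¹) := (cs.length_inv _).symm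
      _ = cs.length (d⁻¹ * g⁻¹) := by rw [mul_inv_rev]
      _ = cs.length d + cs.length g⁻¹ := h6
      _ = cs.length g + cs.length d := by rw [cs.length_inv]; omega
  -- the Kilmoyer/Deodhar step
  have DC : ∀ x ∈ G, x ≠ 1 → d⁻¹ * x * d ∈ H → ∀ σ : B, cs.simple σ ∈ G →
      cs.IsLeftDescent x σ → d⁻¹ * cs.simple σ * d ∈ H := by
    intro x hxG hx1 hxH σ hσG hdesc
    set y := d⁻¹ * x * d with hy
    have hxd : x * d = d * y := by rw [hy]; group
    have hly : cs.length y = cs.length x := by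
      have h1 : cs.length (x * d) = cs.length x + cs.length d := ADD_G x hxG
      have h2 : cs.length (d * y) = cs.length d + cs.length y := ADD_H y hxH
      rw [hxd] at h1
      omega
    have hlσd : cs.length (cs.simple σ * d) = 1 + cs.length d := by
      have := ADD_G (cs.simple σ) hσG
      rwa [cs.length_simple] at this
    obtain ⟨e, ⟨h', hh', he⟩, adde⟩ := coset_min_rep cs ({u,v} : Set B) (cs.simple σ * d)
    have hed : cs.simple σ * d = e * h'⁻¹ := by rw [← he]; group
    have hle1 : cs.length d ≤ cs.length e := by
      have h1 := hmin (cs.simple σ) hσG h' hh'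
      rwa [he] at h1
    have hle2 : cs.length (cs.simple σ * d) = cs.length e + cs.length h'⁻¹ := by
      rw [hed]; exact adde h'⁻¹ (inv_mem hh')
    have hld : cs.length (cs.simple σ * x) + 1 = cs.length x := by
      have hdesc' : cs.length (cs.simple σ * x) < cs.length x := hdesc
      rcases cs.length_simple_mul x σ with h | h
      · omega
      · exact h
    rcases Nat.lt_or_ge (cs.length e) (cs.length d + 1) with hcase | hcase
    · -- ℓ e = ℓ d ; Deodhar case
      have hlh' : cs.length h'⁻¹ = 1 := by omega
      have hle : cs.length e = cs.length d := by omega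
      obtain ⟨k, hk⟩ := cs.length_eq_one_iff.mp hlh'
      by_cases hedq : e = d
      · -- conclusion
        have hq : cs.simple σ * d = d * h'⁻¹ := by rw [hed, hedq]
        have hq2 : d⁻¹ * cs.simple σ * d = h'⁻¹ := by
          rw [mul_assoc, hq]; group
        rw [hq2]
        exact inv_mem hh'
      · exfalso
        obtain ⟨ωe, hωelen, hωeprod⟩ := cs.exists_reduced_word e
        have hωelen : cs.length e = ωe.length := by rw [hωeprod]; exact hωelen
        have hword : cs.wordProd (ωe ++ [k]) = cs.simple σ * d := by
          rw [cs.wordProd_append, cs.wordProd_singleton, ← hωeprod, ← hk, hed]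
        have hwred : cs.IsReduced (ωe ++ [k]) := by
          show cs.length _ = _
          rw [hword, hlσd]
          simp only [length_append, length_singleton, hωelen]
          omega
        have hinv : cs.IsLeftInversion (cs.wordProd (ωe ++ [k])) (cs.simple σ) := by
          refine ⟨cs.isReflection_simple σ, ?_⟩
          rw [hword, cs.simple_mul_simple_cancel_left, hlσd]
          omega
        obtain ⟨j, hj, hje⟩ := exchange_left cs (ωe ++ [k]) (cs.isReflection_simple σ) hinv
        rw [hword, cs.simple_mul_simple_cancel_left] at hje
        by_cases hjd : j < ωe.length
        · rw [eraseIdx_append_left ωe j hjd [k]] at hje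
          rw [cs.wordProd_append, cs.wordProd_singleton, ← hk] at hje
          have h1 : d * h' = cs.wordProd (ωe.eraseIdx j) := by
            rw [hje]
            have : h'⁻¹⁻¹ = h' := inv_inv h'
            group
          have h2 : cs.length (d * h') = cs.length d + 1 := by
            rw [ADD_H h' hh']
            have : cs.length h' = 1 := by rw [← cs.length_inv]; exact hlh'
            omega
          have h3 := cs.length_wordProd_le (ωe.eraseIdx j)
          have h4 := List.length_eraseIdx_add_one hjd
          rw [← h1] at h3
          omega
        · push_neg at hjd
          rw [eraseIdx_append_right ωe [k] j hjd] at hje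
          have hj0 : j - ωe.length = 0 := by
            simp only [length_append, length_singleton] at hj
            omega
          rw [hj0] at hje
          simp only [List.eraseIdx] at hje
          rw [List.append_nil] at hje
          rw [← hωeprod] at hje
          exact hedq hje.symm
    · -- ℓ e = ℓ d + 1 : contradiction with x
      exfalso
      have hlh0 : cs.length h'⁻¹ = 0 := by omega
      have h4 : h'⁻¹ = 1 := cs.length_eq_zero_iff.mp hlh0
      have h5 : e = cs.simple σ * d := by rw [hed, h4, mul_one]
      have hcomp1 : cs.length (cs.simple σ * x * d) = cs.length x - 1 + cs.length d := by
        have h6 : cs.simple σ * x ∈ G := mul_mem hσG hxG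
        have := ADD_G _ h6
        rw [this]
        omega
      have hcomp2 : cs.simple σ * x * d = e * y := by
        rw [h5, mul_assoc, hxd, ← mul_assoc]
      have hcomp3 : cs.length (e * y) = cs.length d + 1 + cs.length x := by
        rw [adde y hxH, h5, hlσd, hly]
        omega
      rw [hcomp2, hcomp3] at hcomp1
      have hx0 : cs.length x ≠ 0 := fun h => hx1 (cs.length_eq_zero_iff.mp h)
      omega
  -- A is inside the closure of the conjugation-compatible simples
  set SK : Set W := {w | (w = cs.simple s ∨ w = cs.simple t) ∧ d⁻¹ * w * d ∈ H} with hSK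
  have ACL : ∀ x, x ∈ G → d⁻¹ * x * d ∈ H → x ∈ Subgroup.closure SK := by
    have key : ∀ (n : ℕ) (x : W), cs.length x ≤ n → x ∈ G → d⁻¹ * x * d ∈ H →
        x ∈ Subgroup.closure SK := by
      intro n
      induction n with
      | zero =>
        intro x hlen _ _
        have : x = 1 := cs.length_eq_zero_iff.mp (Nat.le_zero.mp hlen)
        subst this
        exact one_mem _
      | succ n ih =>
        intro x hlen hxG hxH
        by_cases hx1 : x = 1
        · subst hx1; exact one_mem _
        obtain ⟨σ, hσK, hdesc, hmem⟩ := exists_leftDescent_mem cs ({s,t} : Set B) hxG hx1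
        have hσG : cs.simple σ ∈ G := Subgroup.subset_closure ⟨σ, hσK, rfl⟩
        have hσH : d⁻¹ * cs.simple σ * d ∈ H := DC x hxG hx1 hxH σ hσG hdesc
        have hσSK : cs.simple σ ∈ SK := by
          refine ⟨?_, hσH⟩
          rcases hσK with h | h
          · left; rw [h]
          · right; rw [Set.mem_singleton_iff] at h; rw [h]
        have hmemH : d⁻¹ * (cs.simple σ * x) * d ∈ H := by
          have : d⁻¹ * (cs.simple σ * x) * d = (d⁻¹ * cs.simple σ * d) * (d⁻¹ * x * d) := by
            group
          rw [this]
          exact mul_mem hσH hxH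
        have hlen' : cs.length (cs.simple σ * x) ≤ n := by
          have : cs.length (cs.simple σ * x) < cs.length x := hdesc
          omega
        have ih1 := ih (cs.simple σ * x) hlen' hmem hmemH
        have : x = cs.simple σ * (cs.simple σ * x) := by
          rw [cs.simple_mul_simple_cancel_left]
        rw [this]
        exact mul_mem (Subgroup.subset_closure hσSK) ih1
    intro x hx1 hx2
    exact key (cs.length x) x le_rfl hx1 hx2
  have haSK := ACL a haG haH
  have hbSK := ACL b hbG hbH
  -- both simples must be conjugation-compatible, and they are distinct
  have hstel : cs.simple s ≠ cs.simple t := by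
    intro hq
    apply pair_closure_contra (cs.simple_mul_simple_self s)
      (SK := SK) (w₀ := cs.simple s) ?_ haSK hbSK ha1 hb1 hab
    rintro w ⟨hw1, _⟩
    rcases hw1 with h | h
    · rw [h]; rfl
    · rw [h, ← hq]; rfl
  have hcs : d⁻¹ * cs.simple s * d ∈ H := by
    by_contra hcs
    apply pair_closure_contra (cs.simple_mul_simple_self t)
      (SK := SK) (w₀ := cs.simple t) ?_ haSK hbSK ha1 hb1 hab
    rintro w ⟨hw1, hw2⟩
    rcases hw1 with h | h
    · exact absurd (h ▸ hw2) hcs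
    · rw [h]; rfl
  have hct : d⁻¹ * cs.simple t * d ∈ H := by
    by_contra hct
    apply pair_closure_contra (cs.simple_mul_simple_self s)
      (SK := SK) (w₀ := cs.simple s) ?_ haSK hbSK ha1 hb1 hab
    rintro w ⟨hw1, hw2⟩
    rcases hw1 with h | h
    · rw [h]; rfl
    · exact absurd (h ▸ hw2) hct
  -- the conjugated simples have length one and lie in the simple image of {u, v}
  have hτlen : ∀ σ : B, cs.simple σ ∈ G → d⁻¹ * cs.simple σ * d ∈ H →
      cs.length (d⁻¹ * cs.simple σ * d) = 1 := by
    intro σ hσG hτH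
    have h1 : cs.simple σ * d = d * (d⁻¹ * cs.simple σ * d) := by group
    have h2 : cs.length (cs.simple σ * d) = 1 + cs.length d := by
      have := ADD_G (cs.simple σ) hσG
      rwa [cs.length_simple] at this
    have h3 := ADD_H _ hτH
    rw [← h1, h2] at h3
    omega
  have hsG : cs.simple s ∈ G := Subgroup.subset_closure ⟨s, by simp, rfl⟩
  have htG : cs.simple t ∈ G := Subgroup.subset_closure ⟨t, by simp, rfl⟩
  have hτs1 : cs.length (d⁻¹ * cs.simple s * d) = 1 := hτlen s hsG hcs
  have hτt1 : cs.length (d⁻¹ * cs.simple t * d) = 1 := hτlen t htG hct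
  have h2conj : d * (d⁻¹ * cs.simple s * d) * d⁻¹ = cs.simple s := by group
  have h3conj : d * (d⁻¹ * cs.simple t * d) * d⁻¹ = cs.simple t := by group
  have hτsim : ∀ τ : W, τ ∈ H → cs.length τ = 1 → τ = cs.simple u ∨ τ = cs.simple v := by
    intro τ hτ h1
    obtain ⟨k, hk, hke⟩ := simple_img_of_length_one_mem cs ({u,v} : Set B) hτ h1
    rcases hk with h | h
    · left; rw [← hke, h]
    · right; rw [← hke]; rw [Set.mem_singleton_iff] at h; rw [h]
  by_cases hd1 : d = 1
  · -- conclusion case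
    refine ⟨hd1, ?_⟩
    have hτs' : d⁻¹ * cs.simple s * d = cs.simple s := by rw [hd1]; simp
    have hτt' : d⁻¹ * cs.simple t * d = cs.simple t := by rw [hd1]; simp
    have hs' := hτsim _ hcs hτs1
    have ht' := hτsim _ hct hτt1
    rw [hτs'] at hs'
    rw [hτt'] at ht'
    have hsets : cs.simple '' ({s,t} : Set B) = cs.simple '' ({u,v} : Set B) := by
      have him1 : cs.simple '' ({s,t} : Set B) = {cs.simple s, cs.simple t} :=
        Set.image_pair _ _ _
      have him2 : cs.simple '' ({u,v} : Set B) = {cs.simple u, cs.simple v} :=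
        Set.image_pair _ _ _
      rw [him1, him2]
      rcases hs' with h1 | h1 <;> rcases ht' with h2 | h2
      · exact absurd (h1.trans h2.symm) hstel
      · rw [h1, h2]
      · rw [h1, h2]; exact Set.pair_comm _ _
      · exact absurd (h1.trans h2.symm) hstel
    rw [hG, hH, hsets]
  · -- contradiction case
    exfalso
    obtain ⟨z, hz⟩ := cs.exists_leftDescent_of_ne_one hd1
    have hzd : cs.length (cs.simple z * d) < cs.length d := hz
    have hzs : cs.simple z ≠ cs.simple s := by
      intro h
      have h1 := ADD_G (cs.simple s) hsG
      rw [cs.length_simple] at h1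
      rw [h] at hzd
      omega
    have hzt : cs.simple z ≠ cs.simple t := by
      intro h
      have h1 := ADD_G (cs.simple t) htG
      rw [cs.length_simple] at h1
      rw [h] at hzd
      omega
    obtain ⟨aH, haHm, hmaxH⟩ := exists_max_elt cs (P := H) hHfin
    set V := d * aH with hV
    have hlV : cs.length V = cs.length d + cs.length aH := ADD_H aH haHm
    have hstep : ∀ σ : B, cs.simple σ ∈ G → d⁻¹ * cs.simple σ * d ∈ H →
        cs.IsLeftDescent V σ := by
      intro σ hσG hτH
      show cs.length (cs.simple σ * V) < cs.length V
      have h1 : cs.simple σ * V = d * ((d⁻¹ * cs.simple σ * d) * aH) := by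
        rw [hV]; group
      have h2 : (d⁻¹ * cs.simple σ * d) * aH ∈ H := mul_mem hτH haHm
      have h3 : cs.length ((d⁻¹ * cs.simple σ * d) * aH) + 1 = cs.length aH := by
        obtain ⟨k, hk⟩ := cs.length_eq_one_iff.mp (hτlen σ hσG hτH)
        rw [hk]
        apply simple_mul_max cs haHm hmaxH
        rw [← hk]
        exact hτH
      rw [h1, ADD_H _ h2, hlV]
      omega
    have hdesc : ∀ i ∈ (↑({z, s, t} : Finset B) : Set B), cs.IsLeftDescent V i := by
      intro i hi
      simp only [Finset.coe_insert, Finset.coe_singleton, Set.mem_insert_iff,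
        Set.mem_singleton_iff] at hi
      rcases hi with rfl | rfl | rfl
      · show cs.length (cs.simple i * V) < cs.length V
        calc cs.length (cs.simple i * V) = cs.length ((cs.simple i * d) * aH) := by
              rw [hV, mul_assoc]
          _ ≤ cs.length (cs.simple i * d) + cs.length aH := cs.length_mul_le _ _
          _ < cs.length d + cs.length aH := by omega
          _ = cs.length V := hlV.symm
      · exact hstep i hsG hcs
      · exact hstep i htG hct
    have hzs' : z ≠ s := fun h => hzs (by rw [h])
    have hzt' : z ≠ t := fun h => hzt (by rw [h])
    have hcard : ({z, s, t} : Finset B).card = 3 := by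
      rw [Finset.card_insert_of_notMem (by simp [hzs', hzt']),
          Finset.card_insert_of_notMem (by simp [hst]), Finset.card_singleton]
    apply hrank3 ({z,s,t} : Finset B) hcard
    exact descent_parabolic_finite cs (↑({z,s,t} : Finset B) : Set B) V hdesc
      (Finset.finite_toSet _)

end Core

section RootPair

lemma mem_rootpair_iff {α : Set W} {r : W} (h : IsRootPair cs α r) :
    ∃ c : ZMod 2, ∀ x : W, x ∈ α ↔ eta cs x⁻¹ r = c := by
  obtain ⟨v, s₀, hα, hr⟩ := h
  refine ⟨eta cs v (cs.simple s₀), fun x => ?_⟩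
  have h1 : x ∈ α ↔ cs.length (v⁻¹ * x) < cs.length (cs.simple s₀ * (v⁻¹ * x)) := by
    rw [hα]
    constructor
    · rintro ⟨y, hy, rfl⟩
      have hyy : v⁻¹ * (v * y) = y := by group
      rw [hyy]
      exact hy
    · intro hx
      exact ⟨v⁻¹ * x, hx, by group⟩
  have h2 : (cs.length (v⁻¹ * x) < cs.length (cs.simple s₀ * (v⁻¹ * x)))
      ↔ ¬ cs.IsLeftInversion (v⁻¹ * x) (cs.simple s₀) := by
    have hne := cs.length_simple_mul_ne (v⁻¹ * x) s₀
    constructor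
    · intro hlt hinv
      exact absurd hinv.2 (by omega)
    · intro hninv
      rcases Nat.lt_or_ge (cs.length (v⁻¹ * x)) (cs.length (cs.simple s₀ * (v⁻¹ * x))) with h | h
      · exact h
      · exfalso
        apply hninv
        exact ⟨cs.isReflection_simple s₀, by omega⟩
  have h3 : cs.IsLeftInversion (v⁻¹ * x) (cs.simple s₀)
      ↔ eta cs (v⁻¹ * x)⁻¹ (cs.simple s₀) = 1 :=
    isLeftInversion_iff_eta cs (cs.isReflection_simple s₀) _
  have h4 : (v⁻¹ * x)⁻¹ = x⁻¹ * v := by group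
  have h5 : eta cs (x⁻¹ * v) (cs.simple s₀)
      = eta cs v (cs.simple s₀) + eta cs x⁻¹ (v * cs.simple s₀ * v⁻¹) := by
    rw [eta_mul]
  rw [h1, h2, h3, h4, h5, ← hr]
  have hfin : ∀ a b : ZMod 2, (¬ (b + a = 1)) ↔ a = b := by decide
  exact hfin _ _

lemma rootpair_ne_one {α : Set W} {r : W} (h : IsRootPair cs α r) : r ≠ 1 := by
  obtain ⟨v, s₀, _, rfl⟩ := h
  intro hone
  have h1 : cs.simple s₀ = 1 := by
    have := congrArg (fun w => v⁻¹ * w * v) hone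
    simpa [mul_assoc] using this
  have h2 := cs.length_simple s₀
  rw [h1] at h2
  simp at h2

lemma rootpair_reflection_ne {α β : Set W} {rα rβ : W}
    (hα : IsRootPair cs α rα) (hβ : IsRootPair cs β rβ)
    (hne : α ≠ β) (hnopp : α ≠ βᶜ) : rα ≠ rβ := by
  intro hr
  obtain ⟨cα, hA⟩ := mem_rootpair_iff cs hα
  obtain ⟨cβ, hB⟩ := mem_rootpair_iff cs hβ
  rw [hr] at hA
  by_cases hc : cα = cβ
  · apply hne
    ext x
    rw [hA, hB, hc]
  · apply hnopp
    ext x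
    rw [hA]
    simp only [Set.mem_compl_iff]
    rw [hB]
    revert hc
    have : ∀ a c₁ c₂ : ZMod 2, ¬ c₁ = c₂ → (a = c₁ ↔ ¬ a = c₂) := by decide
    exact this _ _ _

end RootPair

section Cosets

lemma mem_limg {x g : W} {S : Set W} : g ∈ (x * ·) '' S ↔ x⁻¹ * g ∈ S := by
  constructor
  · rintro ⟨y, hy, rfl⟩
    have : x⁻¹ * (x * y) = y := by group
    rw [this]
    exact hy
  · intro h
    exact ⟨x⁻¹ * g, h, by group⟩

lemma limg_comp (x y : W) (S : Set W) : (x * ·) '' ((y * ·) '' S) = ((x * y) * ·) '' S := by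
  rw [← Set.image_comp]
  apply Set.image_congr'
  intro z
  simp [mul_assoc]

lemma subgroup_limg {h : W} {P : Subgroup W} (hh : h ∈ P) :
    (h * ·) '' (P : Set W) = (P : Set W) := by
  ext g
  rw [mem_limg]
  constructor
  · intro hg
    have : g = h * (h⁻¹ * g) := by group
    rw [this]
    exact mul_mem hh hg
  · intro hg
    exact mul_mem (inv_mem hh) hg

lemma stab_mem {r c : W} {P : Subgroup W}
    (h : (r * ·) '' ((c * ·) '' (P : Set W)) = (c * ·) '' (P : Set W)) :
    c⁻¹ * r * c ∈ P := by
  have h1 : c ∈ (c * ·) '' (P : Set W) := ⟨1, one_mem P, mul_one c⟩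
  have h2 : r * c ∈ (r * ·) '' ((c * ·) '' (P : Set W)) := ⟨c, h1, rfl⟩
  rw [h] at h2
  rw [mem_limg] at h2
  have : c⁻¹ * r * c = c⁻¹ * (r * c) := by group
  rw [this]
  exact h2

end Cosets

end Stmt14Aux

/-- If every rank-3 standard parabolic subgroup is infinite and
`α ≠ ±β` are roots, then any two spherical rank-2 residues stabilized by both `r_α`
and `r_β` coincide. -/
theorem stmt14 (cs : CoxeterSystem M W)
    (hrank3 : ∀ J : Finset B, J.card = 3 →
      (Subgroup.closure (cs.simple '' (J : Set B)) : Set W).Infinite)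
    (α β : Set W) (rα rβ : W)
    (hα : IsRootPair cs α rα) (hβ : IsRootPair cs β rβ)
    (hne : α ≠ β) (hnopp : α ≠ βᶜ)
    (R T : Set W)
    (hR : R ∈ res2 cs rα ∧ R ∈ res2 cs rβ)
    (hT : T ∈ res2 cs rα ∧ T ∈ res2 cs rβ) :
    R = T := by
  classical
  letI : DecidableEq W := Classical.decEq W
  obtain ⟨hRα, hRβ⟩ := hR
  obtain ⟨hTα, hTβ⟩ := hT
  obtain ⟨⟨c, s, t, hst, hGfin, hRdef⟩, hstabRα⟩ := hRα
  have hstabRβ := hRβ.2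
  obtain ⟨⟨d₀, u, v, huv, hHfin, hTdef⟩, hstabTα⟩ := hTα
  have hstabTβ := hTβ.2
  have hbG : ({cs.simple s, cs.simple t} : Set W) = cs.simple '' ({s,t} : Set B) :=
    (Set.image_pair _ _ _).symm
  have hbH : ({cs.simple u, cs.simple v} : Set W) = cs.simple '' ({u,v} : Set B) :=
    (Set.image_pair _ _ _).symm
  set G := Subgroup.closure (cs.simple '' ({s,t} : Set B)) with hGdef
  set H := Subgroup.closure (cs.simple '' ({u,v} : Set B)) with hHdef
  have hGG : Subgroup.closure ({cs.simple s, cs.simple t} : Set W) = G := by rw [hbG]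
  have hHH : Subgroup.closure ({cs.simple u, cs.simple v} : Set W) = H := by rw [hbH]
  rw [hGG] at hGfin hRdef
  rw [hHH] at hHfin hTdef
  rw [hRdef] at hstabRα hstabRβ
  rw [hTdef] at hstabTα hstabTβ
  have haR : c⁻¹ * rα * c ∈ G := Stmt14Aux.stab_mem hstabRα
  have hbR : c⁻¹ * rβ * c ∈ G := Stmt14Aux.stab_mem hstabRβ
  have haT : d₀⁻¹ * rα * d₀ ∈ H := Stmt14Aux.stab_mem hstabTα
  have hbT : d₀⁻¹ * rβ * d₀ ∈ H := Stmt14Aux.stab_mem hstabTβ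
  have hrne : rα ≠ rβ := Stmt14Aux.rootpair_reflection_ne cs hα hβ hne hnopp
  have hrα1 : rα ≠ 1 := Stmt14Aux.rootpair_ne_one cs hα
  have hrβ1 : rβ ≠ 1 := Stmt14Aux.rootpair_ne_one cs hβ
  -- choose a minimal-length element of the double coset G (c⁻¹d₀) H
  set e₀ := c⁻¹ * d₀ with he₀
  set F : Set W := {x | ∃ g ∈ G, ∃ h ∈ H, x = g * e₀ * h} with hF
  have hFne : (cs.length '' F).Nonempty :=
    ⟨cs.length e₀, e₀, ⟨1, one_mem G, 1, one_mem H, by group⟩, rfl⟩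
  obtain ⟨d, ⟨g', hg', h₀, hh₀, hdeq⟩, hdl⟩ := Nat.sInf_mem hFne
  have hmin : ∀ g ∈ G, ∀ h ∈ H, cs.length d ≤ cs.length (g * d * h) := by
    intro g hg h hh
    rw [hdl]
    apply Nat.sInf_le
    exact ⟨g * d * h, ⟨g * g', mul_mem hg hg', h₀ * h, mul_mem hh₀ hh, by rw [hdeq]; group⟩, rfl⟩
  set a := g' * (c⁻¹ * rα * c) * g'⁻¹ with ha
  set b := g' * (c⁻¹ * rβ * c) * g'⁻¹ with hb
  have haG : a ∈ G := mul_mem (mul_mem hg' haR) (inv_mem hg')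
  have hbG2 : b ∈ G := mul_mem (mul_mem hg' hbR) (inv_mem hg')
  have hconj : ∀ r : W, d⁻¹ * (g' * (c⁻¹ * r * c) * g'⁻¹) * d
      = h₀⁻¹ * (d₀⁻¹ * r * d₀) * h₀ := by
    intro r
    rw [hdeq, he₀]
    group
  have haH : d⁻¹ * a * d ∈ H := by
    rw [ha, hconj rα]
    exact mul_mem (mul_mem (inv_mem hh₀) haT) hh₀
  have hbH2 : d⁻¹ * b * d ∈ H := by
    rw [hb, hconj rβ]
    exact mul_mem (mul_mem (inv_mem hh₀) hbT) hh₀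
  have e1 : c * (g'⁻¹ * (g' * (c⁻¹ * rα * c) * g'⁻¹) * g') * c⁻¹ = rα := by group
  have e2 : c * (g'⁻¹ * (g' * (c⁻¹ * rβ * c) * g'⁻¹) * g') * c⁻¹ = rβ := by group
  have e3 : c * (g'⁻¹ * (1:W) * g') * c⁻¹ = 1 := by group
  have hab : a ≠ b := by
    intro h
    apply hrne
    have h1 : c * (g'⁻¹ * a * g') * c⁻¹ = c * (g'⁻¹ * b * g') * c⁻¹ := by rw [h]
    rw [ha, hb, e1, e2] at h1
    exact h1
  have ha1 : a ≠ 1 := by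
    intro h
    apply hrα1
    have h1 : c * (g'⁻¹ * a * g') * c⁻¹ = c * (g'⁻¹ * 1 * g') * c⁻¹ := by rw [h]
    rw [ha, e1, e3] at h1
    exact h1
  have hb1 : b ≠ 1 := by
    intro h
    apply hrβ1
    have h1 : c * (g'⁻¹ * b * g') * c⁻¹ = c * (g'⁻¹ * 1 * g') * c⁻¹ := by rw [h]
    rw [hb, e2, e3] at h1
    exact h1
  obtain ⟨hd1, hsets⟩ := Stmt14Aux.core_lemma cs s t u v hst huv hHfin
    (fun J hJ hfin => (hrank3 J hJ) hfin) d hmin a b haG hbG2 haH hbH2 hab ha1 hb1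
  -- conclude
  have he₀' : e₀ = g'⁻¹ * h₀⁻¹ := by
    have h1 : (1:W) = g' * e₀ * h₀ := by rw [← hd1, hdeq]
    have h2 := congrArg (fun w => g'⁻¹ * w * h₀⁻¹) h1
    rw [show g'⁻¹ * (g' * e₀ * h₀) * h₀⁻¹ = e₀ by group] at h2
    rw [← h2]
    group
  have hd₀' : d₀ = c * (g'⁻¹ * h₀⁻¹) := by
    rw [← he₀']
    rw [he₀]
    group
  rw [hRdef, hTdef, hd₀']
  calc (c * ·) '' (G : Set W)
      = (c * ·) '' ((g'⁻¹ * ·) '' (G : Set W)) := by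
        rw [Stmt14Aux.subgroup_limg (inv_mem hg')]
    _ = (c * ·) '' ((g'⁻¹ * ·) '' (H : Set W)) := by rw [hsets]
    _ = (c * ·) '' ((g'⁻¹ * ·) '' ((h₀⁻¹ * ·) '' (H : Set W))) := by
        rw [Stmt14Aux.subgroup_limg (inv_mem hh₀)]
    _ = ((c * (g'⁻¹ * h₀⁻¹)) * ·) '' (H : Set W) := by
        rw [Stmt14Aux.limg_comp, Stmt14Aux.limg_comp]
        have hassoc : c * g'⁻¹ * h₀⁻¹ = c * (g'⁻¹ * h₀⁻¹) := by group
        rw [hassoc]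
end

section
/- Let (W,S) be a Coxeter system, R a spherical rank-2 residue of Σ(W,S) and α a root. Then exactly one of the following holds: R ⊆ α, R ⊆ −α, or R is stabilized by the reflection r_α. -/
variable {B W : Type*} [Group W] {M : CoxeterMatrix B}

namespace Stmt15Aux

open CoxeterSystem List

variable {B W : Type*} [Group W] {M : CoxeterMatrix B} (cs : CoxeterSystem M W)

local prefix:100 "σ" => cs.simple
local prefix:100 "π" => cs.wordProd
local prefix:100 "ℓ" => cs.length

open Classical in
/-- The sign-flipping involution attached to a simple reflection. -/
noncomputable def tfun (i : B) : W × ℤˣ → W × ℤˣ :=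
  fun p => (σ i * p.1 * σ i, if p.1 = σ i then -p.2 else p.2)

lemma conj_simple_eq_iff (i : B) (t : W) : σ i * t * σ i = σ i ↔ t = σ i := by
  constructor
  · intro h
    have := congrArg (fun x => σ i * x * σ i) h
    simpa [mul_assoc, cs.simple_mul_simple_cancel_left] using this
  · rintro rfl; rw [cs.simple_mul_simple_self, one_mul]

open Classical in
lemma tfun_invol (i : B) : Function.Involutive (tfun cs i) := by
  rintro ⟨t, e⟩
  simp only [tfun]
  refine Prod.ext ?_ ?_
  · simp only
    rw [mul_assoc (σ i) t (σ i), cs.simple_mul_simple_cancel_left,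
      cs.simple_mul_simple_cancel_right]
  · simp only
    by_cases h : t = σ i
    · subst h
      simp [cs.simple_mul_simple_self]
    · have h2 : ¬ (σ i * t * σ i = σ i) := fun hc => h ((conj_simple_eq_iff cs i t).mp hc)
      rw [if_neg h2, if_neg h]

/-- Tits' permutation attached to a simple reflection. -/
noncomputable def tperm (i : B) : Equiv.Perm (W × ℤˣ) :=
  (tfun_invol cs i).toPerm

open Classical in
lemma tperm_apply (i : B) (t : W) (e : ℤˣ) :
    tperm cs i (t, e) = (σ i * t * σ i, if t = σ i then -e else e) := rfl

open Classical in
/-- The sign of `t` with respect to the word `ω`: `(-1)` to the number of occurrences of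
`t` in the right inversion sequence of `ω`. -/
noncomputable def sgn (t : W) (ω : List B) : ℤˣ :=
  ((cs.rightInvSeq ω).map (fun x => if x = t then (-1 : ℤˣ) else 1)).prod

lemma sgn_nil (t : W) : sgn cs t [] = 1 := by simp [sgn]

open Classical in
lemma sgn_cons (t : W) (i : B) (ω : List B) :
    sgn cs t (i :: ω) =
      (if (π ω)⁻¹ * σ i * π ω = t then (-1:ℤˣ) else 1) * sgn cs t ω := by
  simp [sgn, rightInvSeq]

lemma sgn_of_not_mem {t : W} {ω : List B} (h : t ∉ cs.rightInvSeq ω) : sgn cs t ω = 1 := by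
  classical
  apply List.prod_eq_one
  intro x hx
  simp only [List.mem_map] at hx
  obtain ⟨y, hy, rfl⟩ := hx
  rw [if_neg]
  rintro rfl
  exact h hy

open Classical in
lemma prodMap_tperm (ω : List B) (t : W) (e : ℤˣ) :
    ((ω.map (tperm cs)).prod) (t, e) = (π ω * t * (π ω)⁻¹, sgn cs t ω * e) := by
  classical
  induction ω generalizing t e with
  | nil => simp [sgn_nil]
  | cons i ω ih =>
    rw [List.map_cons, List.prod_cons, Equiv.Perm.mul_apply, ih, tperm_apply, sgn_cons,
      cs.wordProd_cons]
    refine Prod.ext ?_ ?_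
    · simp only
      rw [mul_inv_rev, cs.inv_simple]
      group
    · simp only
      have hiff : π ω * t * (π ω)⁻¹ = σ i ↔ (π ω)⁻¹ * σ i * π ω = t := by
        constructor
        · intro h; rw [← h]; group
        · intro h; rw [← h]; group
      by_cases h : (π ω)⁻¹ * σ i * π ω = t
      · rw [if_pos (hiff.mpr h), if_pos h]
        simp [mul_assoc]
      · rw [if_neg (fun hc => h (hiff.mp hc)), if_neg h]
        simp


lemma aw_drop (i i' : B) : ∀ (n k : ℕ),
    (alternatingWord i i' n).drop k = alternatingWord i i' (n - k) := by
  intro n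
  induction n with
  | zero => intro k; simp [alternatingWord]
  | succ m ih =>
    intro k
    cases k with
    | zero => simp
    | succ k =>
      rw [alternatingWord_succ' i i' m, List.drop_succ_cons, ih k]
      congr 1
      omega

lemma aw_get? (i i' : B) (n j : ℕ) (hj : j < n) :
    (alternatingWord i i' n)[j]? = some (if Even (n - j - 1) then i' else i) := by
  have h1 : (alternatingWord i i' n)[j]? = ((alternatingWord i i' n).drop j)[0]? := by
    rw [List.getElem?_drop, Nat.add_zero]
  rw [h1, aw_drop, (by omega : n - j = (n - j - 1) + 1), alternatingWord_succ']
  rfl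

/-- Entry formula for the right inversion sequence of an alternating word. -/
lemma ris_aw_getD (i i' : B) (n j : ℕ) (hj : j < n) :
    (cs.rightInvSeq (alternatingWord i i' n)).getD j 1 =
      (π (alternatingWord i i' (n - j - 1)))⁻¹
        * σ (if Even (n - j - 1) then i' else i)
        * π (alternatingWord i i' (n - j - 1)) := by
  rw [cs.getD_rightInvSeq, aw_get? i i' n j hj, aw_drop]
  rfl

section AbstractDihedral

variable {G : Type*} [Group G] {a b p : G} (hb : b * b = 1) (hbp : b * p = p⁻¹ * b)
  (ha : a * a = 1) (hp : p = a * b)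

include hbp in
lemma L1 (t : ℕ) : b * p ^ t = (p ^ t)⁻¹ * b := by
  induction t with
  | zero => simp
  | succ t ih =>
    calc b * p ^ (t + 1) = (b * p ^ t) * p := by rw [pow_succ, mul_assoc]
      _ = (p ^ t)⁻¹ * (b * p) := by rw [ih, mul_assoc]
      _ = (p ^ t)⁻¹ * (p⁻¹ * b) := by rw [hbp]
      _ = (p ^ (t + 1))⁻¹ * b := by group

include hbp in
lemma L2 (t : ℕ) : (p ^ t)⁻¹ * b * p ^ t = (p ^ (2 * t))⁻¹ * b := by
  rw [mul_assoc, L1 hbp]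
  group

include hb hbp ha hp in
lemma L3 (t : ℕ) : (b * p ^ t)⁻¹ * a * (b * p ^ t) = (p ^ (2 * t + 1))⁻¹ * b := by
  have hbinv : b⁻¹ = b := by
    rw [← mul_one b⁻¹, ← hb, ← mul_assoc, inv_mul_cancel, one_mul]
  have hbab : b * a * b = p⁻¹ * b := by
    rw [mul_assoc, ← hp, hbp]
  calc (b * p ^ t)⁻¹ * a * (b * p ^ t)
      = ((p ^ t)⁻¹ * b) * a * (b * p ^ t) := by rw [mul_inv_rev, hbinv]
    _ = (p ^ t)⁻¹ * (b * a * b) * p ^ t := by group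
    _ = (p ^ t)⁻¹ * (p⁻¹ * b) * p ^ t := by rw [hbab]
    _ = (p ^ t)⁻¹ * p⁻¹ * (b * p ^ t) := by group
    _ = (p ^ t)⁻¹ * p⁻¹ * ((p ^ t)⁻¹ * b) := by rw [L1 hbp]
    _ = (p ^ (2 * t + 1))⁻¹ * b := by group

include hp in
lemma p_reduce (m n : ℕ) (hm : p ^ m = 1) : p ^ (n + m) = p ^ n := by
  rw [pow_add, hm, mul_one]

end AbstractDihedral

section Algebra

variable (i i' : B)

lemma cs_hb : σ i' * σ i' = 1 := cs.simple_mul_simple_self i'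

lemma cs_ha : σ i * σ i = 1 := cs.simple_mul_simple_self i

lemma cs_hbp : σ i' * (σ i * σ i') = (σ i * σ i')⁻¹ * σ i' := by
  rw [mul_inv_rev, cs.inv_simple, cs.inv_simple, mul_assoc]

/-- The core dihedral computation: entries of the inversion sequence of the `2m`-alternating
word repeat with period `m`. -/
lemma period_lemma (m k : ℕ) (hm : (σ i * σ i') ^ m = 1) :
    (π (alternatingWord i i' (k + m)))⁻¹ * σ (if Even (k + m) then i' else i)
        * π (alternatingWord i i' (k + m)) =
      (π (alternatingWord i i' k))⁻¹ * σ (if Even k then i' else i)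
        * π (alternatingWord i i' k) := by
  have hπ : ∀ n : ℕ, π (alternatingWord i i' n)
      = (if Even n then 1 else σ i') * (σ i * σ i') ^ (n / 2) :=
    cs.prod_alternatingWord_eq_mul_pow i i'
  have hNB := L2 (cs_hbp cs i i')
  have hNA := L3 (cs_hb cs i') (cs_hbp cs i i') (cs_ha cs i) rfl
  have hred : ∀ n v : ℕ, ((σ i * σ i') ^ (n + v * m))⁻¹ * σ i'
      = ((σ i * σ i') ^ n)⁻¹ * σ i' := by
    intro n v
    induction v with
    | zero => rw [Nat.zero_mul, Nat.add_zero]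
    | succ v ih => rw [(by ring : n + (v + 1) * m = (n + v * m) + m), pow_add, hm, mul_one, ih]
  rcases Nat.even_or_odd m with ⟨m', hm'⟩ | ⟨m', hm'⟩ <;>
    rcases Nat.even_or_odd k with ⟨k', hk'⟩ | ⟨k', hk'⟩ <;> subst hm' hk'
  · -- m = 2m', k = 2k'
    have hkm : Even (k' + k' + (m' + m')) := ⟨k' + m', by omega⟩
    have hk : Even (k' + k') := ⟨k', by omega⟩
    rw [hπ (k' + k' + (m' + m')), hπ (k' + k'), if_pos hkm, if_pos hk, if_pos hkm, if_pos hk]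
    rw [(by omega : (k' + k' + (m' + m')) / 2 = k' + m'), (by omega : (k' + k') / 2 = k')]
    rw [one_mul, one_mul, hNB, hNB]
    rw [(by ring : 2 * (k' + m') = 2 * k' + 1 * (m' + m')), hred (2 * k') 1]
  · -- m = 2m', k = 2k'+1
    have hkm : ¬ Even (2 * k' + 1 + (m' + m')) := by rintro ⟨r, hr⟩; omega
    have hk : ¬ Even (2 * k' + 1) := by rintro ⟨r, hr⟩; omega
    rw [hπ (2 * k' + 1 + (m' + m')), hπ (2 * k' + 1), if_neg hkm, if_neg hk, if_neg hkm, if_neg hk]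
    rw [(by omega : (2 * k' + 1 + (m' + m')) / 2 = k' + m'), (by omega : (2 * k' + 1) / 2 = k')]
    rw [hNA, hNA]
    rw [(by ring : 2 * (k' + m') + 1 = (2 * k' + 1) + 1 * (m' + m')), hred (2 * k' + 1) 1]
  · -- m = 2m'+1, k = 2k'
    have hkm : ¬ Even (k' + k' + (2 * m' + 1)) := by rintro ⟨r, hr⟩; omega
    have hk : Even (k' + k') := ⟨k', by omega⟩
    rw [hπ (k' + k' + (2 * m' + 1)), hπ (k' + k'), if_neg hkm, if_pos hk, if_neg hkm, if_pos hk]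
    rw [(by omega : (k' + k' + (2 * m' + 1)) / 2 = k' + m'), (by omega : (k' + k') / 2 = k')]
    rw [one_mul, hNA, hNB]
    rw [(by ring : 2 * (k' + m') + 1 = 2 * k' + 1 * (2 * m' + 1)), hred (2 * k') 1]
  · -- m = 2m'+1, k = 2k'+1
    have hkm : Even (2 * k' + 1 + (2 * m' + 1)) := ⟨k' + m' + 1, by omega⟩
    have hk : ¬ Even (2 * k' + 1) := by rintro ⟨r, hr⟩; omega
    rw [hπ (2 * k' + 1 + (2 * m' + 1)), hπ (2 * k' + 1), if_pos hkm, if_neg hk, if_pos hkm,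
      if_neg hk]
    rw [(by omega : (2 * k' + 1 + (2 * m' + 1)) / 2 = k' + m' + 1),
      (by omega : (2 * k' + 1) / 2 = k')]
    rw [one_mul, hNB, hNA]
    rw [(by ring : 2 * (k' + m' + 1) = (2 * k' + 1) + 1 * (2 * m' + 1)), hred (2 * k' + 1) 1]

end Algebra

/-- The inversion sequence of the `2m`-alternating word is its second half repeated twice. -/
lemma ris_aw_take_eq_drop (i i' : B) (m : ℕ) (hm : (σ i * σ i') ^ m = 1) :
    (cs.rightInvSeq (alternatingWord i i' (2 * m))).take m
      = (cs.rightInvSeq (alternatingWord i i' (2 * m))).drop m := by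
  have hlen : (cs.rightInvSeq (alternatingWord i i' (2 * m))).length = 2 * m := by
    simp
  apply List.ext_getElem
  · rw [List.length_take, List.length_drop, hlen]
    omega
  · intro j h1 h2
    rw [List.length_take, hlen] at h1
    have hj : j < m := by omega
    rw [List.getElem_take, List.getElem_drop]
    rw [← List.getD_eq_getElem _ 1 (by omega : j < (cs.rightInvSeq (alternatingWord i i' (2*m))).length),
       ← List.getD_eq_getElem _ 1 (by omega : m + j < (cs.rightInvSeq (alternatingWord i i' (2*m))).length)]
    rw [ris_aw_getD cs i i' (2 * m) j (by omega), ris_aw_getD cs i i' (2 * m) (m + j) (by omega)]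
    have e1 : 2 * m - j - 1 = (m - j - 1) + m := by omega
    have e2 : 2 * m - (m + j) - 1 = m - j - 1 := by omega
    rw [e1, e2]
    exact period_lemma cs i i' m (m - j - 1) hm


lemma pow_tperm_eq (i i' : B) (m : ℕ) :
    (tperm cs i * tperm cs i') ^ m = ((alternatingWord i i' (2 * m)).map (tperm cs)).prod := by
  induction m with
  | zero => simp [alternatingWord]
  | succ m ih =>
    have h1 : alternatingWord i i' (2 * (m + 1)) = i :: i' :: alternatingWord i i' (2 * m) := by
      have ho : ¬ Even (2 * m + 1) := by rintro ⟨r, hr⟩; omega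
      have he : Even (2 * m) := ⟨m, by omega⟩
      rw [(by omega : 2 * (m + 1) = (2 * m + 1) + 1), alternatingWord_succ', if_neg ho,
        alternatingWord_succ', if_pos he]
    rw [h1, List.map_cons, List.map_cons, List.prod_cons, List.prod_cons, ← ih, pow_succ',
      mul_assoc]

lemma tperm_liftable : ∀ (i i' : B), (tperm cs i * tperm cs i') ^ (M i i') = 1 := by
  intro i i'
  set m := M i i' with hm
  have hrel : (σ i * σ i') ^ m = 1 := cs.simple_mul_simple_pow i i'
  apply Equiv.ext
  rintro ⟨t, e⟩
  rw [pow_tperm_eq, prodMap_tperm]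
  have hπ1 : π (alternatingWord i i' (2 * m)) = 1 := by
    have he : Even (2 * m) := ⟨m, by omega⟩
    rw [cs.prod_alternatingWord_eq_mul_pow, if_pos he, (by omega : 2 * m / 2 = m), one_mul, hrel]
  have hsgn : sgn cs t (alternatingWord i i' (2 * m)) = 1 := by
    classical
    unfold sgn
    rw [← List.take_append_drop m (cs.rightInvSeq (alternatingWord i i' (2 * m))),
      ← ris_aw_take_eq_drop cs i i' m hrel, List.map_append, List.prod_append]
    exact Int.units_mul_self _
  rw [hπ1, hsgn]
  simp

/-- Tits' sign homomorphism `W →* Perm (W × ℤˣ)`. -/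
noncomputable def rho : W →* Equiv.Perm (W × ℤˣ) :=
  cs.lift ⟨tperm cs, tperm_liftable cs⟩

lemma rho_simple (i : B) : rho cs (σ i) = tperm cs i :=
  cs.lift_apply_simple (tperm_liftable cs) i

lemma rho_wordProd (ω : List B) (t : W) (e : ℤˣ) :
    rho cs (π ω) (t, e) = (π ω * t * (π ω)⁻¹, sgn cs t ω * e) := by
  have h1 : rho cs (π ω) = ((ω.map (tperm cs)).prod) := by
    unfold CoxeterSystem.wordProd
    rw [map_list_prod]
    congr 1
    rw [List.map_map]
    congr 1
    funext j
    exact rho_simple cs j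
  rw [h1, prodMap_tperm]

/-- The side of the wall of `t` on which the chamber `w` lies. -/
noncomputable def eps (w t : W) : ℤˣ := (rho cs w (t, 1)).2

lemma eps_wordProd (ω : List B) (t : W) : eps cs (π ω) t = sgn cs t ω := by
  unfold eps
  rw [rho_wordProd, mul_one]

lemma rho_apply (w t : W) (e : ℤˣ) : rho cs w (t, e) = (w * t * w⁻¹, eps cs w t * e) := by
  obtain ⟨ω, rfl⟩ := cs.wordProd_surjective w
  rw [rho_wordProd, eps_wordProd]

lemma eps_mul (w v t : W) : eps cs (w * v) t = eps cs w (v * t * v⁻¹) * eps cs v t := by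
  have h : rho cs (w * v) (t, 1) = rho cs w (rho cs v (t, 1)) := by
    rw [map_mul]; rfl
  unfold eps
  rw [h, rho_apply cs v t 1, rho_apply cs w (v * t * v⁻¹) (eps cs v t * 1)]
  simp
  rfl

open Classical in
lemma eps_simple (i : B) (t : W) : eps cs (σ i) t = if t = σ i then -1 else 1 := by
  unfold eps
  rw [rho_simple]
  rfl

lemma eps_one (t : W) : eps cs 1 t = 1 := by
  unfold eps
  rw [map_one]
  rfl

lemma eps_inv_mul (w t : W) : eps cs w⁻¹ (w * t * w⁻¹) * eps cs w t = 1 := by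
  rw [← eps_mul, inv_mul_cancel, eps_one]

lemma eps_refl_self {t : W} (ht : cs.IsReflection t) : eps cs t t = -1 := by
  obtain ⟨w, i, rfl⟩ := ht
  have e1 : w * σ i * w⁻¹ = w * (σ i * w⁻¹) := by group
  have e2 : (σ i * w⁻¹) * (w * σ i * w⁻¹) * (σ i * w⁻¹)⁻¹ = σ i := by
    rw [mul_inv_rev, cs.inv_simple, inv_inv]
    calc σ i * w⁻¹ * (w * σ i * w⁻¹) * (w * σ i)
        = σ i * (w⁻¹ * w) * σ i * (w⁻¹ * w) * σ i := by group
      _ = σ i := by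
          rw [inv_mul_cancel, mul_one, mul_one, mul_assoc, cs.simple_mul_simple_cancel_left]
  have e3 : w⁻¹ * (w * σ i * w⁻¹) * w⁻¹⁻¹ = σ i := by group
  rw [e1, eps_mul, ← e1, e2, eps_mul, e3, eps_simple, if_pos rfl]
  have e4 := eps_inv_mul cs w (σ i)
  have : eps cs w (σ i) * (-1 * eps cs w⁻¹ (w * σ i * w⁻¹)) = -1 := by
    rw [mul_comm (eps cs w⁻¹ (w * σ i * w⁻¹)) (eps cs w (σ i))] at e4
    calc eps cs w (σ i) * (-1 * eps cs w⁻¹ (w * σ i * w⁻¹))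
        = -(eps cs w (σ i) * eps cs w⁻¹ (w * σ i * w⁻¹)) := by rw [neg_one_mul, mul_neg]
      _ = -1 := by rw [e4]
  exact this

lemma eps_neg_of_lt {t : W} (ht : cs.IsReflection t) (w : W)
    (h : ℓ (w * t) < ℓ w) : eps cs w t = -1 := by
  rcases Int.units_eq_one_or (eps cs w t) with he | he
  · exfalso
    -- then eps (w*t) t = -1, so ℓ (w*t*t) < ℓ (w*t), i.e. ℓ w < ℓ (w*t)
    have h1 : eps cs (w * t) t = -1 := by
      have e1 : t * t * t⁻¹ = t := by group
      rw [eps_mul, e1, eps_refl_self cs ht, he, one_mul]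
    -- use the "forward" direction: eps = -1 → length decreases
    have h2 : ℓ (w * t * t) < ℓ (w * t) := by
      obtain ⟨ω, hred, hw⟩ := cs.exists_reduced_word' (w * t)
      rw [hw] at h1 ⊢
      have hmem : t ∈ cs.rightInvSeq ω := by
        by_contra hnm
        rw [eps_wordProd, sgn_of_not_mem cs hnm] at h1
        exact absurd h1 (by decide)
      obtain ⟨j, hj, hjt⟩ := List.mem_iff_getElem.mp hmem
      have hj' : j < ω.length := by
        have := cs.length_rightInvSeq ω
        omega
      have ht' : t = (cs.rightInvSeq ω).getD j 1 := by
        rw [List.getD_eq_getElem _ 1 hj, hjt]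
      rw [ht', cs.wordProd_mul_getD_rightInvSeq]
      calc ℓ (π (ω.eraseIdx j)) ≤ (ω.eraseIdx j).length := cs.length_wordProd_le _
        _ < ω.length := by rw [← List.length_eraseIdx_add_one hj']; omega
        _ = ℓ (π ω) := hred.symm
    rw [mul_assoc, ht.mul_self, mul_one] at h2
    omega
  · exact he

lemma eps_neg_iff {t : W} (ht : cs.IsReflection t) (w : W) :
    eps cs w t = -1 ↔ ℓ (w * t) < ℓ w := by
  constructor
  · intro h
    -- forward: take reduced word
    obtain ⟨ω, hred, hw⟩ := cs.exists_reduced_word' w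
    rw [hw] at h ⊢
    have hmem : t ∈ cs.rightInvSeq ω := by
      by_contra hnm
      rw [eps_wordProd, sgn_of_not_mem cs hnm] at h
      exact absurd h (by decide)
    obtain ⟨j, hj, hjt⟩ := List.mem_iff_getElem.mp hmem
    have hj' : j < ω.length := by
      have := cs.length_rightInvSeq ω
      omega
    have ht' : t = (cs.rightInvSeq ω).getD j 1 := by
      rw [List.getD_eq_getElem _ 1 hj, hjt]
    rw [ht', cs.wordProd_mul_getD_rightInvSeq]
    calc ℓ (π (ω.eraseIdx j)) ≤ (ω.eraseIdx j).length := cs.length_wordProd_le _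
      _ < ω.length := by rw [← List.length_eraseIdx_add_one hj']; omega
      _ = ℓ (π ω) := hred.symm
  · exact eps_neg_of_lt cs ht w

/-- If the wall of the reflection `t` separates the adjacent chambers `x` and `x * σ j`,
then `t = x * σ j * x⁻¹`. -/
lemma reflection_of_crossing {t : W} (ht : cs.IsReflection t) (x : W) (j : B)
    (h1 : ¬ ℓ (t * x) < ℓ x) (h2 : ℓ (t * (x * σ j)) < ℓ (x * σ j)) :
    t = x * σ j * x⁻¹ := by
  have key : ∀ y : W, ℓ (t * y) = ℓ (y⁻¹ * t) := by
    intro y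
    rw [← cs.length_inv (y⁻¹ * t), mul_inv_rev, ht.inv, inv_inv]
  have h1' : ¬ ℓ (x⁻¹ * t) < ℓ x⁻¹ := by
    rw [← key, cs.length_inv]
    exact h1
  have h2' : ℓ ((x * σ j)⁻¹ * t) < ℓ ((x * σ j)⁻¹) := by
    rw [← key, cs.length_inv]
    exact h2
  have e1 : eps cs x⁻¹ t = 1 := by
    rcases Int.units_eq_one_or (eps cs x⁻¹ t) with he | he
    · exact he
    · exact absurd ((eps_neg_iff cs ht x⁻¹).mp he) h1'
  have e2 : eps cs ((x * σ j)⁻¹) t = -1 := (eps_neg_iff cs ht _).mpr h2'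
  rw [mul_inv_rev, cs.inv_simple, eps_mul, inv_inv, e1, mul_one, eps_simple] at e2
  by_cases hc : x⁻¹ * t * x = σ j
  · rw [← hc]
    group
  · rw [if_neg hc] at e2
    exact absurd e2 (by decide)

section Assembly

lemma reverse_prod_inv (l : List W) (h : ∀ z ∈ l, z * z = 1) :
    l.reverse.prod = (l.prod)⁻¹ := by
  induction l with
  | nil => simp
  | cons z l ih =>
    rw [List.reverse_cons, List.prod_append, List.prod_singleton, List.prod_cons, mul_inv_rev,
      ih (fun z' hz' => h z' (List.mem_cons_of_mem _ hz'))]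
    congr 1
    exact (inv_eq_of_mul_eq_one_left (h z List.mem_cons_self)).symm

lemma exists_word_of_mem_closure {x y : W} (hx : x * x = 1) (hy : y * y = 1) {p : W}
    (hp : p ∈ Subgroup.closure {x, y}) :
    ∃ l : List W, (∀ z ∈ l, z = x ∨ z = y) ∧ p = l.prod := by
  induction hp using Subgroup.closure_induction with
  | mem z hz =>
    refine ⟨[z], ?_, by simp⟩
    intro z' hz'
    rw [List.mem_singleton] at hz'
    subst hz'
    rcases hz with hz | hz
    · exact Or.inl hz
    · exact Or.inr hz
  | one => exact ⟨[], by simp, by simp⟩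
  | mul a b _ _ iha ihb =>
    obtain ⟨l₁, hl₁, rfl⟩ := iha
    obtain ⟨l₂, hl₂, rfl⟩ := ihb
    refine ⟨l₁ ++ l₂, ?_, by rw [List.prod_append]⟩
    intro z hz
    rcases List.mem_append.mp hz with h | h
    · exact hl₁ z h
    · exact hl₂ z h
  | inv a _ iha =>
    obtain ⟨l, hl, rfl⟩ := iha
    refine ⟨l.reverse, ?_, ?_⟩
    · intro z hz
      exact hl z (List.mem_reverse.mp hz)
    · rw [reverse_prod_inv]
      intro z hz
      rcases hl z hz with rfl | rfl
      · exact hx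
      · exact hy

variable (v : W) (i₀ : B)

lemma mem_root_iff {α : Set W} (hα : α = (v * ·) '' simpleRoot cs i₀) (w : W) :
    w ∈ α ↔ ℓ (v⁻¹ * w) < ℓ (σ i₀ * (v⁻¹ * w)) := by
  subst hα
  constructor
  · rintro ⟨x, hx, rfl⟩
    simpa [inv_mul_cancel_left, simpleRoot] using hx
  · intro h
    exact ⟨v⁻¹ * w, h, by simp [mul_inv_cancel_left]⟩

lemma not_mem_root_iff {α : Set W} (hα : α = (v * ·) '' simpleRoot cs i₀) (w : W) :
    w ∉ α ↔ (v * σ i₀ * v⁻¹) * w ∈ α := by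
  rw [mem_root_iff cs v i₀ hα w, mem_root_iff cs v i₀ hα ((v * σ i₀ * v⁻¹) * w)]
  have e1 : v⁻¹ * ((v * σ i₀ * v⁻¹) * w) = σ i₀ * (v⁻¹ * w) := by group
  have e2 : σ i₀ * (σ i₀ * (v⁻¹ * w)) = v⁻¹ * w := cs.simple_mul_simple_cancel_left i₀
  rw [e1, e2]
  have := cs.length_simple_mul (v⁻¹ * w) i₀
  omega

lemma root_crossing {α : Set W} (hα : α = (v * ·) '' simpleRoot cs i₀) (w : W) (j : B)
    (hw : w ∈ α) (hwj : w * σ j ∉ α) :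
    v * σ i₀ * v⁻¹ = w * σ j * w⁻¹ := by
  rw [mem_root_iff cs v i₀ hα] at hw
  rw [mem_root_iff cs v i₀ hα] at hwj
  have h1 : ¬ ℓ (σ i₀ * (v⁻¹ * w)) < ℓ (v⁻¹ * w) := by omega
  have h2 : ℓ (σ i₀ * ((v⁻¹ * w) * σ j)) < ℓ ((v⁻¹ * w) * σ j) := by
    have e : (v⁻¹ * w) * σ j = v⁻¹ * (w * σ j) := by rw [mul_assoc]
    rw [e]
    have := cs.length_simple_mul (v⁻¹ * (w * σ j)) i₀
    omega
  have := reflection_of_crossing cs (cs.isReflection_simple i₀) (v⁻¹ * w) j h1 h2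
  rw [this]
  group

end Assembly

section Gallery

lemma exists_crossing_chamber (α : Set W) (sa sb : B) (l : List W)
    (hl : ∀ z ∈ l, z = σ sa ∨ z = σ sb) :
    ∀ w : W, w ∈ α → w * l.prod ∉ α →
      ∃ u : W, ∃ j : B, (j = sa ∨ j = sb) ∧ u ∈ α ∧ u * σ j ∉ α ∧
        w⁻¹ * u ∈ Subgroup.closure {σ sa, σ sb} := by
  induction l with
  | nil =>
    intro w hw hnw
    rw [List.prod_nil, mul_one] at hnw
    exact absurd hw hnw
  | cons z l ih =>
    intro w hw hnw
    have hz := hl z List.mem_cons_self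
    have hzc : z ∈ Subgroup.closure {σ sa, σ sb} := by
      rcases hz with rfl | rfl
      · exact Subgroup.subset_closure (Set.mem_insert _ _)
      · exact Subgroup.subset_closure (Set.mem_insert_of_mem _ rfl)
    by_cases hmem : w * z ∈ α
    · obtain ⟨u, j, hj, hu, huj, hcl⟩ :=
        ih (fun z' hz' => hl z' (List.mem_cons_of_mem _ hz')) (w * z) hmem
          (by rwa [List.prod_cons, ← mul_assoc] at hnw)
      refine ⟨u, j, hj, hu, huj, ?_⟩
      have he : w⁻¹ * u = z * ((w * z)⁻¹ * u) := by group
      rw [he]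
      exact Subgroup.mul_mem _ hzc hcl
    · rcases hz with rfl | rfl
      · exact ⟨w, sa, Or.inl rfl, hw, hmem, by simpa using Subgroup.one_mem _⟩
      · exact ⟨w, sb, Or.inr rfl, hw, hmem, by simpa using Subgroup.one_mem _⟩

end Gallery

end Stmt15Aux

/-- For a spherical rank-2 residue `R` and a root `α` with reflection
`r_α`, exactly one of the following holds: `R ⊆ α`, `R ⊆ -α`, or `R` is stabilized by
`r_α`. -/
theorem stmt15 (cs : CoxeterSystem M W) (R : Set W) (hres : IsSphRank2Residue cs R)
    (α : Set W) (r : W) (hα : IsRootPair cs α r) :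
    (R ⊆ α ∧ ¬ R ⊆ αᶜ ∧ ¬ (r * ·) '' R = R) ∨
    (¬ R ⊆ α ∧ R ⊆ αᶜ ∧ ¬ (r * ·) '' R = R) ∨
    (¬ R ⊆ α ∧ ¬ R ⊆ αᶜ ∧ (r * ·) '' R = R) := by
  classical
  obtain ⟨c, sa, sb, hne, hfin, hR⟩ := hres
  obtain ⟨v, i₀, hαdef, hrdef⟩ := hα
  have hrefl : cs.IsReflection r := ⟨v, i₀, hrdef⟩
  have hrr : r * r = 1 := hrefl.mul_self
  have hcR : c ∈ R := by
    rw [hR]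
    exact ⟨1, Subgroup.one_mem _, by simp⟩
  have hxor : ∀ w : W, w ∉ α ↔ r * w ∈ α := by
    intro w
    rw [hrdef]
    exact Stmt15Aux.not_mem_root_iff cs v i₀ hαdef w
  have hstab_not_sub : (r * ·) '' R = R → ¬ R ⊆ α ∧ ¬ R ⊆ αᶜ := by
    intro hst
    have hrc : r * c ∈ R := by
      rw [← hst]
      exact ⟨c, hcR, rfl⟩
    constructor
    · intro hsub
      exact absurd (hsub hcR) ((hxor c).mpr (hsub hrc))
    · intro hsub
      exact absurd ((hxor c).mp (hsub hcR)) (hsub hrc)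
  have hmain : ¬ R ⊆ α → ¬ R ⊆ αᶜ → (r * ·) '' R = R := by
    intro hna hnc
    obtain ⟨b0, hb0R, hb0⟩ := Set.not_subset.mp hna
    obtain ⟨a0, ha0R, ha0'⟩ := Set.not_subset.mp hnc
    have ha0 : a0 ∈ α := Set.notMem_compl_iff.mp ha0'
    rw [hR] at ha0R hb0R
    obtain ⟨p, hp, hpe⟩ := ha0R
    obtain ⟨q, hq, hqe⟩ := hb0R
    simp only at hpe hqe
    subst hpe hqe
    have hp' : p ∈ Subgroup.closure {cs.simple sa, cs.simple sb} := hp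
    have hq' : q ∈ Subgroup.closure {cs.simple sa, cs.simple sb} := hq
    have hpq : p⁻¹ * q ∈ Subgroup.closure {cs.simple sa, cs.simple sb} :=
      Subgroup.mul_mem _ (Subgroup.inv_mem _ hp') hq'
    obtain ⟨l, hl, hlp⟩ := Stmt15Aux.exists_word_of_mem_closure
      (cs.simple_mul_simple_self sa) (cs.simple_mul_simple_self sb) hpq
    have hprod : (c * p) * l.prod = c * q := by
      rw [← hlp]
      group
    obtain ⟨u, j, hj, hu, huj, hcu⟩ := Stmt15Aux.exists_crossing_chamber cs α sa sb l hl (c * p)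
      ha0 (by rw [hprod]; exact hb0)
    have hru : r = u * cs.simple j * u⁻¹ := by
      rw [hrdef]
      exact Stmt15Aux.root_crossing cs v i₀ hαdef u j hu huj
    have hcu' : c⁻¹ * u ∈ Subgroup.closure {cs.simple sa, cs.simple sb} := by
      have he : c⁻¹ * u = p * ((c * p)⁻¹ * u) := by group
      rw [he]
      exact Subgroup.mul_mem _ hp' hcu
    have hjmem : cs.simple j ∈ Subgroup.closure {cs.simple sa, cs.simple sb} := by
      rcases hj with rfl | rfl
      · exact Subgroup.subset_closure (Set.mem_insert _ _)
      · exact Subgroup.subset_closure (Set.mem_insert_of_mem _ rfl)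
    have hsub1 : ∀ x ∈ R, r * x ∈ R := by
      intro x hx
      rw [hR] at hx ⊢
      obtain ⟨p₂, hp₂, hp₂e⟩ := hx
      simp only at hp₂e
      subst hp₂e
      refine ⟨(c⁻¹ * u) * cs.simple j * (c⁻¹ * u)⁻¹ * p₂, ?_, ?_⟩
      · exact Subgroup.mul_mem _ (Subgroup.mul_mem _ (Subgroup.mul_mem _ hcu' hjmem)
          (Subgroup.inv_mem _ hcu')) hp₂
      · show c * ((c⁻¹ * u) * cs.simple j * (c⁻¹ * u)⁻¹ * p₂) = r * (c * p₂)
        rw [hru]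
        group
    ext x
    constructor
    · rintro ⟨y, hy, rfl⟩
      exact hsub1 y hy
    · intro hx
      refine ⟨r * x, hsub1 x hx, ?_⟩
      show r * (r * x) = x
      rw [← mul_assoc, hrr, one_mul]
  by_cases h1 : R ⊆ α
  · left
    refine ⟨h1, ?_, ?_⟩
    · intro h2
      exact (h2 hcR) (h1 hcR)
    · intro hst
      exact (hstab_not_sub hst).1 h1
  · by_cases h2 : R ⊆ αᶜ
    · exact Or.inr (Or.inl ⟨h1, h2, fun hst => (hstab_not_sub hst).2 h2⟩)
    · exact Or.inr (Or.inr ⟨h1, h2, hmain h1 h2⟩)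
end

section
/- Let (W,S) be a Coxeter system of universal type (m_{st} = ∞ for all s ≠ t). If α, β are roots with α ≠ ±β and {α,β} prenilpotent (hence α ⊊ β or β ⊊ α), then every wall ∂γ for γ strictly between α and β is crossed by any minimal gallery from a chamber of α∩β's complement boundary; in particular, for any two positive roots α ⊆ β in Φ(G) along a minimal gallery G, every γ with α ⊆ γ ⊆ β and γ ∈ Φ(G) satisfies α ≤_G γ ≤_G β. -/
variable {B W : Type*} [Group W] {M : CoxeterMatrix B}

/-- For a minimal gallery `G = (1, ..., π ω)` starting at `1` given by a reduced word
`ω`, the root crossed at the `i`-th step: the root containing `c_i = π (ω.take i)` but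
not `c_{i+1}`, namely `c_i • α_{ω_i}`. -/
def crossedRoot (cs : CoxeterSystem M W) (ω : List B) (i : Fin ω.length) : Set W :=
  ((cs.wordProd (ω.take i)) * ·) '' simpleRoot cs (ω.get i)

/-- The chamber `c_i = π (ω.take i)` lies in the root crossed at step `i`. -/
lemma chamber_mem_crossedRoot (cs : CoxeterSystem M W) (ω : List B) (i : Fin ω.length) :
    cs.wordProd (ω.take i) ∈ crossedRoot cs ω i := by
  refine ⟨1, ?_, mul_one _⟩
  simp [simpleRoot, cs.length_simple]

/-- The chamber `c_i` does not lie in the root crossed at an earlier step `l < i`. -/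
lemma chamber_not_mem_crossedRoot (cs : CoxeterSystem M W) {ω : List B}
    (hred : cs.IsReduced ω) {i l : Fin ω.length} (hli : (l : ℕ) < i) :
    cs.wordProd (ω.take i) ∉ crossedRoot cs ω l := by
  rintro ⟨v, hv, hveq⟩
  -- `v = π σ` where `σ = (ω.take i).drop l`
  set σ : List B := (ω.take i).drop l with hσ
  have hlen_take : (ω.take (i : ℕ)).length = i := by
    simp [List.length_take, Nat.min_eq_left (le_of_lt i.2)]
  have hl_lt : (l : ℕ) < (ω.take (i : ℕ)).length := by omega
  have hsplit : ω.take (l : ℕ) ++ σ = ω.take (i : ℕ) := by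
    have h1 : (ω.take (i : ℕ)).take (l : ℕ) = ω.take (l : ℕ) := by
      rw [List.take_take]; congr 1; omega
    rw [hσ, ← h1]
    exact List.take_append_drop _ _
  have hveq' : v = cs.wordProd σ := by
    have : cs.wordProd (ω.take l) * cs.wordProd σ = cs.wordProd (ω.take i) := by
      rw [← cs.wordProd_append, hsplit]
    exact mul_left_cancel (hveq.trans this.symm)
  -- `σ = ω.get l :: τ`
  have hhead : σ = ω.get l :: (ω.take (i : ℕ)).drop ((l : ℕ) + 1) := by
    rw [hσ, List.drop_eq_getElem_cons hl_lt]
    congr 1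
    exact List.getElem_take ..
  set τ : List B := (ω.take (i : ℕ)).drop ((l : ℕ) + 1) with hτ
  -- compute `s_l * v = π τ`
  have hsv : cs.simple (ω.get l) * v = cs.wordProd τ := by
    rw [hveq', hhead, cs.wordProd_cons, cs.simple_mul_simple_cancel_left]
  -- length of `v` is `i - l`, length of `s_l * v` is at most `i - l - 1`
  have hred_σ : cs.length v = (i : ℕ) - l := by
    rw [hveq']
    have : cs.IsReduced σ := CoxeterSystem.IsReduced.drop (CoxeterSystem.IsReduced.take hred i) l
    rw [this, hσ, List.length_drop, hlen_take]
  have hτlen : cs.length (cs.simple (ω.get l) * v) ≤ (i : ℕ) - l - 1 := by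
    rw [hsv]
    calc cs.length (cs.wordProd τ) ≤ τ.length := cs.length_wordProd_le τ
      _ = (i : ℕ) - l - 1 := by rw [hτ, List.length_drop, hlen_take]; omega
  have := hv  -- `ℓ v < ℓ (s_l * v)`
  simp only [simpleRoot, Set.mem_setOf_eq] at this
  omega

/-- Inclusion of crossed roots forces the crossing order. -/
lemma le_of_crossedRoot_subset (cs : CoxeterSystem M W) {ω : List B}
    (hred : cs.IsReduced ω) {i l : Fin ω.length}
    (h : crossedRoot cs ω i ⊆ crossedRoot cs ω l) : (i : ℕ) ≤ l := by
  by_contra hlt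
  exact chamber_not_mem_crossedRoot cs hred (by omega)
    (h (chamber_mem_crossedRoot cs ω i))

/-- In a universal Coxeter system, along a minimal gallery `G` the
crossing order `≤_G` of the roots of `Φ(G)` is compatible with inclusion: if
`α ⊆ γ ⊆ β` are roots crossed by `G` (at steps `i`, `l`, `j` respectively), then
`α ≤_G γ ≤_G β`, i.e. `i ≤ l ≤ j`. -/
theorem stmt17 (cs : CoxeterSystem M W)
    (huniv : ∀ s t : B, s ≠ t → M.M s t = 0)
    (ω : List B) (hred : cs.IsReduced ω)
    (i j l : Fin ω.length)
    (h1 : crossedRoot cs ω i ⊆ crossedRoot cs ω l)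
    (h2 : crossedRoot cs ω l ⊆ crossedRoot cs ω j) :
    (i : ℕ) ≤ l ∧ (l : ℕ) ≤ j := by
  exact ⟨le_of_crossedRoot_subset cs hred h1, le_of_crossedRoot_subset cs hred h2⟩
end
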